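/- arXiv:1905.08272 — 11 statements merged into one kernel-verified Lean document; each statement's English description precedes it below -/
import Mathlib

section
/- Let X and Y be Banach spaces and T : X → Y a compact operator. If every functional in (ker T)^⊥ attains its norm on X, then T attains its norm. -/
theorem statement_3
    {X Y : Type*} [NormedAddCommGroup X] [NormedSpace ℝ X] [CompleteSpace X]
    [NormedAddCommGroup Y] [NormedSpace ℝ Y] [CompleteSpace Y]
    (T : X →L[ℝ] Y) (hT : IsCompactOperator (⇑T))
    (hNA : ∀ f : X →L[ℝ] ℝ, (∀ z ∈ LinearMap.ker (T : X →ₗ[ℝ] Y), f z = 0) →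
      ∃ x : X, ‖x‖ = 1 ∧ |f x| = ‖f‖) :
    ∃ x : X, ‖x‖ = 1 ∧ ‖T x‖ = ‖T‖ := by
  rcases eq_or_lt_of_le (norm_nonneg T) with hT0 | hTpos
  · -- ‖T‖ = 0
    obtain ⟨x, hx1, -⟩ := hNA 0 (fun z _ => rfl)
    refine ⟨x, hx1, ?_⟩
    have : T = 0 := by
      ext v; simpa using norm_le_zero_iff.mp
        (le_trans (T.le_opNorm v) (by rw [← hT0]; simp))
    simp [this, ← hT0]
  · -- ‖T‖ > 0
    have hseq : ∀ n : ℕ, ∃ u : X, ‖u‖ = 1 ∧ ‖T‖ * ((n : ℝ) / (n + 1)) < ‖T u‖ := by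
      intro n
      have hfrac0 : (0 : ℝ) ≤ (n : ℝ) / (n + 1) := by positivity
      have hfrac1 : (n : ℝ) / (n + 1) < 1 := by
        rw [div_lt_one (by positivity)]; linarith
      have hr : ‖T‖ * ((n : ℝ) / (n + 1)) < ‖T‖ :=
        mul_lt_of_lt_one_right hTpos hfrac1
      obtain ⟨x, hx1, hx2⟩ := T.exists_lt_apply_of_lt_opNorm hr
      have hTx : T x ≠ 0 := by
        intro h
        rw [h, norm_zero] at hx2
        exact absurd hx2 (not_lt.mpr (by positivity))
      have hx0 : x ≠ 0 := fun h => hTx (by rw [h, map_zero])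
      have hxn : 0 < ‖x‖ := norm_pos_iff.mpr hx0
      refine ⟨(‖x‖⁻¹ : ℝ) • x, norm_smul_inv_norm hx0, ?_⟩
      rw [map_smul, norm_smul, norm_inv, norm_norm]
      calc ‖T‖ * ((n : ℝ) / (n + 1)) < ‖T x‖ := hx2
        _ ≤ ‖x‖⁻¹ * ‖T x‖ := le_mul_of_one_le_left (norm_nonneg _)
            ((one_le_inv₀ hxn).mpr hx1.le)
    choose u hu1 hu2 using hseq
    -- compactness: T '' closedBall 0 1 has compact closure
    have hK : IsCompact (closure (⇑T '' Metric.closedBall 0 1)) :=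
      hT.isCompact_closure_image_closedBall (𝕜₁ := ℝ) (f := (T : X →ₗ[ℝ] Y)) 1
    have hmem : ∀ n, T (u n) ∈ closure (⇑T '' Metric.closedBall 0 1) := fun n =>
      subset_closure ⟨u n, by simp [Metric.mem_closedBall, (hu1 n).le], rfl⟩
    obtain ⟨y, -, φ, hφ, hy⟩ := hK.tendsto_subseq hmem
    -- the limit y has norm ‖T‖
    have hlow : Filter.Tendsto (fun k => ‖T‖ * ((φ k : ℝ) / (φ k + 1))) Filter.atTop (nhds ‖T‖) := by
      have h1 : Filter.Tendsto (fun n : ℕ => ‖T‖ * ((n : ℝ) / (n + 1))) Filter.atTop (nhds (‖T‖ * 1)) :=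
        (tendsto_natCast_div_add_atTop (1 : ℝ)).const_mul ‖T‖
      rw [mul_one] at h1
      exact h1.comp hφ.tendsto_atTop
    have hnorm : Filter.Tendsto (fun k => ‖T (u (φ k))‖) Filter.atTop (nhds ‖y‖) :=
      (continuous_norm.tendsto y).comp hy
    have hyn : ‖y‖ = ‖T‖ := by
      have hle : ‖y‖ ≤ ‖T‖ :=
        le_of_tendsto hnorm (Filter.Eventually.of_forall fun k => by
          simpa [hu1 (φ k)] using T.le_opNorm (u (φ k)))
      have hge : ‖T‖ ≤ ‖y‖ :=
        le_of_tendsto_of_tendsto' hlow hnorm (fun k => (hu2 (φ k)).le)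
      linarith
    have hy0 : y ≠ 0 := by
      intro h; rw [h, norm_zero] at hyn; linarith
    obtain ⟨g, hg1, hg2⟩ := exists_dual_vector ℝ y (norm_ne_zero_iff.mpr hy0)
    set f : X →L[ℝ] ℝ := g.comp T with hf
    have hfker : ∀ z ∈ LinearMap.ker (T : X →ₗ[ℝ] Y), f z = 0 := by
      intro z hz
      have : T z = 0 := hz
      simp [hf, this]
    have hfle : ‖f‖ ≤ ‖T‖ := le_trans (ContinuousLinearMap.opNorm_comp_le g T) (by
      rw [hg1, one_mul])
    have hfge : ‖T‖ ≤ ‖f‖ := by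
      have htend : Filter.Tendsto (fun k => |f (u (φ k))|) Filter.atTop (nhds |g y|) :=
        ((continuous_abs.comp g.continuous).tendsto y).comp hy
      have hgy : |g y| = ‖T‖ := by
        rw [hg2]
        simp only [RCLike.ofReal_real_eq_id, id_eq]
        rw [hyn, abs_of_pos hTpos]
      rw [← hgy]
      exact le_of_tendsto htend (Filter.Eventually.of_forall fun k => by
        calc |f (u (φ k))| = ‖f (u (φ k))‖ := (Real.norm_eq_abs _).symm
          _ ≤ ‖f‖ * ‖u (φ k)‖ := f.le_opNorm _
          _ = ‖f‖ := by rw [hu1, mul_one])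
    have hfT : ‖f‖ = ‖T‖ := le_antisymm hfle hfge
    obtain ⟨x, hx1, hx2⟩ := hNA f hfker
    refine ⟨x, hx1, ?_⟩
    have h1 : ‖T x‖ ≤ ‖T‖ := by simpa [hx1] using T.le_opNorm x
    have h2 : ‖T‖ ≤ ‖T x‖ := by
      calc ‖T‖ = |f x| := by rw [← hfT, hx2]
        _ = ‖g (T x)‖ := by rw [Real.norm_eq_abs]; rfl
        _ ≤ ‖g‖ * ‖T x‖ := g.le_opNorm _
        _ = ‖T x‖ := by rw [hg1, one_mul]
    linarith
end

section
/- If X is a non-smooth Banach space (i.e., there exist a unit vector x₀ ∈ X and two distinct norm-one functionals f, g ∈ X* with f(x₀) = g(x₀) = 1), then for every Banach space Y of dimension at least 2 there exists a norm attaining bounded linear operator T : X → Y of rank two. -/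
theorem statement_5
    {X : Type u} [NormedAddCommGroup X] [NormedSpace ℝ X] [CompleteSpace X]
    (hns : ∃ (x₀ : X) (f g : X →L[ℝ] ℝ), ‖x₀‖ = 1 ∧ ‖f‖ = 1 ∧ ‖g‖ = 1 ∧
      f ≠ g ∧ f x₀ = 1 ∧ g x₀ = 1) :
    ∀ (Y : Type v) [NormedAddCommGroup Y] [NormedSpace ℝ Y] [CompleteSpace Y],
      2 ≤ Module.rank ℝ Y →
      ∃ T : X →L[ℝ] Y, Module.finrank ℝ ↥(LinearMap.range (T : X →ₗ[ℝ] Y)) = 2 ∧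
        ∃ x : X, ‖x‖ = 1 ∧ ‖T x‖ = ‖T‖ := by
  obtain ⟨x₀, f, g, hx₀, hf, hg, hfg, hfx, hgx⟩ := hns
  intro Y _ _ _ hrank
  have h1rank : (1 : Cardinal) < Module.rank ℝ Y :=
    lt_of_lt_of_le (by norm_num) hrank
  have hnt : Nontrivial Y :=
    rank_pos_iff_nontrivial.mp (lt_of_lt_of_le (by norm_num) hrank)
  obtain ⟨y₁, hy₁⟩ := exists_ne (0 : Y)
  obtain ⟨y₂, hind⟩ := exists_linearIndependent_pair_of_one_lt_rank h1rank hy₁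
  have hy₂ : y₂ ≠ 0 := by
    have := hind.ne_zero 1
    simpa using this
  set u : Y := ‖y₁‖⁻¹ • y₁ with hu_def
  set v : Y := ‖y₂‖⁻¹ • y₂ with hv_def
  have hn₁ : ‖y₁‖ ≠ 0 := norm_ne_zero_iff.mpr hy₁
  have hn₂ : ‖y₂‖ ≠ 0 := norm_ne_zero_iff.mpr hy₂
  have hu : ‖u‖ = 1 := by
    rw [hu_def, norm_smul, norm_inv, norm_norm, inv_mul_cancel₀ hn₁]
  have hv : ‖v‖ = 1 := by
    rw [hv_def, norm_smul, norm_inv, norm_norm, inv_mul_cancel₀ hn₂]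
  have huv : LinearIndependent ℝ ![u, v] := by
    rw [LinearIndependent.pair_iff]
    intro s t hst
    rw [hu_def, hv_def, smul_smul, smul_smul] at hst
    obtain ⟨h1, h2⟩ := (LinearIndependent.pair_iff.mp hind) _ _ hst
    constructor
    · field_simp at h1; simpa using h1
    · field_simp at h2; simpa using h2
  clear_value u v
  set T : X →L[ℝ] Y :=
    ((f + g).smulRight ((2:ℝ)⁻¹ • u)) + ((f - g).smulRight ((2:ℝ)⁻¹ • v)) with hT_def
  have hTapp : ∀ x : X, T x = (f x + g x) • ((2:ℝ)⁻¹ • u) + (f x - g x) • ((2:ℝ)⁻¹ • v) := by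
    intro x
    simp [hT_def]
  have hTx₀ : T x₀ = u := by
    rw [hTapp, hfx, hgx]
    rw [smul_smul, smul_smul]
    norm_num
  have hbound : ∀ x : X, ‖T x‖ ≤ ‖x‖ := by
    intro x
    have hfx' : |f x| ≤ ‖x‖ := by
      have := f.le_opNorm x
      rwa [hf, one_mul, Real.norm_eq_abs] at this
    have hgx' : |g x| ≤ ‖x‖ := by
      have := g.le_opNorm x
      rwa [hg, one_mul, Real.norm_eq_abs] at this
    have ha := abs_le.mp hfx'
    have hb := abs_le.mp hgx'
    calc ‖T x‖ ≤ ‖(f x + g x) • ((2:ℝ)⁻¹ • u)‖ + ‖(f x - g x) • ((2:ℝ)⁻¹ • v)‖ := by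
          rw [hTapp]; exact norm_add_le _ _
      _ = |f x + g x| * 2⁻¹ + |f x - g x| * 2⁻¹ := by
          rw [norm_smul, norm_smul, norm_smul, norm_smul, hu, hv]
          simp [Real.norm_eq_abs, abs_of_nonneg]
      _ ≤ ‖x‖ := by
          rcases abs_cases (f x + g x) with ⟨h1, _⟩ | ⟨h1, _⟩ <;>
            rcases abs_cases (f x - g x) with ⟨h2, _⟩ | ⟨h2, _⟩ <;>
            rw [h1, h2] <;> linarith
  have hTnorm : ‖T‖ = 1 := by
    apply le_antisymm
    · exact T.opNorm_le_bound zero_le_one (fun x => by rw [one_mul]; exact hbound x)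
    · have := T.le_opNorm x₀
      rwa [hTx₀, hu, hx₀, mul_one] at this
  obtain ⟨z, hz⟩ : ∃ z : X, f z ≠ g z := by
    by_contra h
    push_neg at h
    exact hfg (ContinuousLinearMap.ext h)
  have hbz : f z - g z ≠ 0 := sub_ne_zero.mpr hz
  have hurange : u ∈ LinearMap.range (T : X →ₗ[ℝ] Y) := ⟨x₀, hTx₀⟩
  have hvrange : v ∈ LinearMap.range (T : X →ₗ[ℝ] Y) := by
    have hveq : v = (2 / (f z - g z)) • T z - ((f z + g z) / (f z - g z)) • u := by
      rw [hTapp z]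
      match_scalars <;> field_simp <;> ring
    rw [hveq]
    exact sub_mem (Submodule.smul_mem _ _ ⟨z, rfl⟩) (Submodule.smul_mem _ _ hurange)
  have hrange : LinearMap.range (T : X →ₗ[ℝ] Y) = Submodule.span ℝ (Set.range ![u, v]) := by
    apply le_antisymm
    · rintro _ ⟨x, rfl⟩
      rw [ContinuousLinearMap.coe_coe, hTapp]
      exact add_mem
        (Submodule.smul_mem _ _ (Submodule.smul_mem _ _
          (Submodule.subset_span ⟨0, rfl⟩)))
        (Submodule.smul_mem _ _ (Submodule.smul_mem _ _
          (Submodule.subset_span ⟨1, rfl⟩)))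
    · rw [Submodule.span_le]
      rintro y ⟨i, rfl⟩
      fin_cases i
      · exact hurange
      · exact hvrange
  refine ⟨T, ?_, x₀, hx₀, by rw [hTx₀, hu, hTnorm]⟩
  rw [hrange, finrank_span_eq_card huv]
  simp
end

section
/- Let E be a two-dimensional normed space, e₁ ∈ E a unit vector, e₁* a norm-one functional with e₁*(e₁) = 1, and e₂ a unit vector in the kernel of e₁*. For 0 < τ < 1, let T_τ : E → E be the linear operator with T_τ(e₁) = e₁ and T_τ(e₂) = τ e₂. Then for every compact set K ⊆ E with sup_{x ∈ K} |e₁*(x)| < 1, there exists 0 < τ < 1 such that T_τ(K) is contained in the open unit ball of E. -/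
theorem statement_6
    {E : Type*} [NormedAddCommGroup E] [NormedSpace ℝ E]
    (hdim : Module.finrank ℝ E = 2)
    (e₁ : E) (he₁ : ‖e₁‖ = 1)
    (e₁star : E →L[ℝ] ℝ) (he₁star : ‖e₁star‖ = 1) (heval : e₁star e₁ = 1)
    (e₂ : E) (he₂ : ‖e₂‖ = 1) (he₂ker : e₁star e₂ = 0)
    (K : Set E) (hK : IsCompact K)
    (hsup : ∃ c < (1 : ℝ), ∀ x ∈ K, |e₁star x| ≤ c) :
    ∃ τ : ℝ, 0 < τ ∧ τ < 1 ∧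
      ∀ T : E →L[ℝ] E, T e₁ = e₁ → T e₂ = τ • e₂ →
        ∀ x ∈ K, ‖T x‖ < 1 := by
  obtain ⟨c, hc1, hcK⟩ := hsup
  haveI : FiniteDimensional ℝ E := FiniteDimensional.of_finrank_eq_succ hdim
  -- linear independence of e₁, e₂
  have hli : LinearIndependent ℝ ![e₁, e₂] := by
    rw [LinearIndependent.pair_iff]
    intro s t hst
    have h0 : e₁star (s • e₁ + t • e₂) = 0 := by rw [hst]; simp
    simp [heval, he₂ker] at h0
    subst h0
    simp at hst
    rcases hst with h | h
    · exact ⟨rfl, h⟩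
    · exfalso; rw [h] at he₂; simp at he₂
  have hcard : Fintype.card (Fin 2) = Module.finrank ℝ E := by simp [hdim]
  let b := basisOfLinearIndependentOfCardEqFinrank hli hcard
  have hb0 : b 0 = e₁ := by simp [b]
  have hb1 : b 1 = e₂ := by simp [b]
  -- coordinate functional
  let f : E →ₗ[ℝ] ℝ := b.coord 1
  have hfc : Continuous f := LinearMap.continuous_of_finiteDimensional f
  have hdecomp : ∀ x : E, x = e₁star x • e₁ + f x • e₂ := by
    intro x
    have hx := b.sum_repr x
    rw [Fin.sum_univ_two, hb0, hb1] at hx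
    have h0 : e₁star x = b.repr x 0 := by
      conv_lhs => rw [← hx]
      simp [heval, he₂ker]
    have h1 : f x = b.repr x 1 := rfl
    rw [h0, h1, hx]
  obtain ⟨M, hM⟩ := hK.exists_bound_of_continuousOn hfc.continuousOn
  set M' := max M 0 with hM'def
  set c' := max c 0 with hc'def
  have hc'1 : c' < 1 := max_lt hc1 one_pos
  have hc'0 : 0 ≤ c' := le_max_right _ _
  have hM'0 : 0 ≤ M' := le_max_right _ _
  set τ := (1 - c') / (2 * (M' + 1)) with hτdef
  have hden : 0 < 2 * (M' + 1) := by nlinarith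
  have hτpos : 0 < τ := div_pos (by linarith) hden
  have hτeq : τ * (2 * (M' + 1)) = 1 - c' := div_mul_cancel₀ _ (ne_of_gt hden)
  refine ⟨τ, hτpos, by nlinarith, ?_⟩
  intro T hTe₁ hTe₂ x hx
  have hTx : T x = e₁star x • e₁ + (τ * f x) • e₂ := by
    conv_lhs => rw [hdecomp x]
    rw [map_add, map_smul, map_smul, hTe₁, hTe₂, smul_smul, mul_comm]
  have h1 : |e₁star x| ≤ c' := le_trans (hcK x hx) (le_max_left _ _)
  have h2 : |f x| ≤ M' := le_trans (by simpa using hM x hx) (le_max_left _ _)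
  calc ‖T x‖ ≤ ‖e₁star x • e₁‖ + ‖(τ * f x) • e₂‖ := by rw [hTx]; exact norm_add_le _ _
    _ = |e₁star x| + τ * |f x| := by
        rw [norm_smul, norm_smul, he₁, he₂, mul_one, mul_one, Real.norm_eq_abs,
          Real.norm_eq_abs, abs_mul, abs_of_pos hτpos]
    _ < 1 := by nlinarith [mul_le_mul_of_nonneg_left h2 hτpos.le]
end

section
/- Let Y be a two-dimensional normed space, x₁, x₂ ∈ Y linearly independent smooth points of the unit sphere with supporting functionals x₁*, x₂* (norm one, x_i*(x_i) = 1) that are linearly independent. Let y be a unit vector of the form y = a₁x₁ + a₂x₂ with a₁, a₂ > 0. Then every norm-one functional f with f(y) = 1 lies in the cone {c₁ x₁* + c₂ x₂* : c₁, c₂ ≥ 0}. -/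
theorem statement_7
    {Y : Type*} [NormedAddCommGroup Y] [NormedSpace ℝ Y]
    (hdim : Module.finrank ℝ Y = 2)
    (x₁ x₂ : Y) (hx₁ : ‖x₁‖ = 1) (hx₂ : ‖x₂‖ = 1)
    (hind : LinearIndependent ℝ ![x₁, x₂])
    (x₁star x₂star : Y →L[ℝ] ℝ)
    (hx₁star : ‖x₁star‖ = 1) (hx₂star : ‖x₂star‖ = 1)
    (hsupp₁ : x₁star x₁ = 1) (hsupp₂ : x₂star x₂ = 1)
    (hsmooth₁ : ∀ g : Y →L[ℝ] ℝ, ‖g‖ = 1 → g x₁ = 1 → g = x₁star)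
    (hsmooth₂ : ∀ g : Y →L[ℝ] ℝ, ‖g‖ = 1 → g x₂ = 1 → g = x₂star)
    (hindstar : LinearIndependent ℝ ![x₁star, x₂star])
    (a₁ a₂ : ℝ) (ha₁ : 0 < a₁) (ha₂ : 0 < a₂)
    (y : Y) (hy : y = a₁ • x₁ + a₂ • x₂) (hynorm : ‖y‖ = 1)
    (f : Y →L[ℝ] ℝ) (hf : ‖f‖ = 1) (hfy : f y = 1) :
    ∃ c₁ c₂ : ℝ, 0 ≤ c₁ ∧ 0 ≤ c₂ ∧ f = c₁ • x₁star + c₂ • x₂star := by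
  have hfin : FiniteDimensional ℝ Y := FiniteDimensional.of_finrank_eq_succ hdim
  -- the dual has dimension 2
  have hdual : Module.finrank ℝ (Y →L[ℝ] ℝ) = 2 := by
    rw [← (LinearMap.toContinuousLinearMap :
        (Y →ₗ[ℝ] ℝ) ≃ₗ[ℝ] (Y →L[ℝ] ℝ)).finrank_eq]
    rw [Module.finrank_linearMap, hdim, Module.finrank_self, mul_one]
  -- f is a linear combination of x₁star and x₂star
  have hspan : Submodule.span ℝ (Set.range ![x₁star, x₂star]) = ⊤ :=
    hindstar.span_eq_top_of_card_eq_finrank (by simp [hdual])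
  have hmem : f ∈ Submodule.span ℝ ({x₁star, x₂star} : Set (Y →L[ℝ] ℝ)) := by
    have : (Set.range ![x₁star, x₂star]) = {x₁star, x₂star} := by
      ext g; simp [Matrix.range_cons, Matrix.range_empty]; tauto
    rw [← this, hspan]; trivial
  obtain ⟨c₁, c₂, hc⟩ := Submodule.mem_span_pair.mp hmem
  -- bounds on evaluations
  have habs : ∀ (g : Y →L[ℝ] ℝ) (x : Y), ‖g‖ = 1 → ‖x‖ = 1 → |g x| ≤ 1 := by
    intro g x hg hx
    have := g.le_opNorm x
    rw [hg, hx, Real.norm_eq_abs] at this; linarith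
  set α := x₁star x₂ with hαdef
  set β := x₂star x₁ with hβdef
  have hα : |α| ≤ 1 := habs _ _ hx₁star hx₂
  have hβle : |β| ≤ 1 := habs _ _ hx₂star hx₁
  have hne : ∀ a : ℝ, a • x₂star ≠ x₁star := by
    have := (linearIndependent_fin2.mp hindstar).2
    simpa using this
  have hβ : |β| < 1 := by
    rcases lt_or_eq_of_le hβle with h | h
    · exact h
    · exfalso
      rcases abs_eq (by norm_num : (0:ℝ) ≤ 1) |>.mp h with h1 | h1
      · have := hsmooth₁ x₂star hx₂star h1
        exact hne 1 (by simpa using this)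
      · have hn : ‖-x₂star‖ = 1 := by rwa [norm_neg]
        have hv : (-x₂star) x₁ = 1 := by
          simp [ContinuousLinearMap.neg_apply, ← hβdef, h1]
        have := hsmooth₁ (-x₂star) hn hv
        exact hne (-1) (by rw [← this]; ext z; simp)
  have hD : 0 < 1 - α * β := by
    have : |α * β| < 1 := by
      rw [abs_mul]
      calc |α| * |β| ≤ 1 * |β| := by gcongr
        _ < 1 := by simpa using hβ
    have := (abs_lt.mp this).2
    linarith
  -- evaluate f on x₁, x₂
  have e1 : f x₁ = c₁ + c₂ * β := by
    rw [← hc]; simp [hsupp₁, mul_comm, hβdef]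
  have e2 : f x₂ = c₁ * α + c₂ := by
    rw [← hc]; simp [hsupp₂, mul_comm, hαdef]
  have hf1 : |f x₁| ≤ 1 := habs _ _ hf hx₁
  have hf2 : |f x₂| ≤ 1 := habs _ _ hf hx₂
  have heval : a₁ * f x₁ + a₂ * f x₂ = 1 := by
    rw [← hfy, hy]; simp [mul_comm]
  have hy1 : |a₁ + a₂ * α| ≤ 1 := by
    have := habs x₁star y hx₁star hynorm
    rw [hy] at this; simpa [hsupp₁, mul_comm] using this
  have hy2 : |a₁ * β + a₂| ≤ 1 := by
    have := habs x₂star y hx₂star hynorm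
    rw [hy] at this; simpa [hsupp₂, mul_comm] using this
  have key1 : (a₁ + a₂ * α) * f x₁ ≤ 1 := by
    calc (a₁ + a₂ * α) * f x₁ ≤ |(a₁ + a₂ * α) * f x₁| := le_abs_self _
      _ = |a₁ + a₂ * α| * |f x₁| := abs_mul _ _
      _ ≤ 1 := mul_le_one₀ hy1 (abs_nonneg _) hf1
  have key2 : (a₁ * β + a₂) * f x₂ ≤ 1 := by
    calc (a₁ * β + a₂) * f x₂ ≤ |(a₁ * β + a₂) * f x₂| := le_abs_self _
      _ = |a₁ * β + a₂| * |f x₂| := abs_mul _ _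
      _ ≤ 1 := mul_le_one₀ hy2 (abs_nonneg _) hf2
  have heval' : a₁ * (c₁ + c₂ * β) + a₂ * (c₁ * α + c₂) = 1 := by
    rw [← e1, ← e2]; exact heval
  have key1' : (a₁ + a₂ * α) * (c₁ + c₂ * β) ≤ 1 := by rw [← e1]; exact key1
  have key2' : (a₁ * β + a₂) * (c₁ * α + c₂) ≤ 1 := by rw [← e2]; exact key2
  have step1 : a₁ * (c₁ * (1 - α * β)) = 1 - (a₁ * β + a₂) * (c₁ * α + c₂) := by
    linear_combination heval'
  have step2 : a₂ * (c₂ * (1 - α * β)) = 1 - (a₁ + a₂ * α) * (c₁ + c₂ * β) := by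
    linear_combination heval'
  have h1 : 0 ≤ c₁ * (1 - α * β) := by
    have h1' : 0 ≤ a₁ * (c₁ * (1 - α * β)) := by rw [step1]; linarith
    exact nonneg_of_mul_nonneg_right h1' ha₁
  have h2 : 0 ≤ c₂ * (1 - α * β) := by
    have h2' : 0 ≤ a₂ * (c₂ * (1 - α * β)) := by rw [step2]; linarith
    exact nonneg_of_mul_nonneg_right h2' ha₂
  have hc₁ : 0 ≤ c₁ := nonneg_of_mul_nonneg_left h1 hD
  have hc₂ : 0 ≤ c₂ := nonneg_of_mul_nonneg_left h2 hD
  exact ⟨c₁, c₂, hc₁, hc₂, hc.symm⟩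
end

section
/- Let X be a Banach space, E a two-dimensional normed space that is not strictly convex, and Z a closed subspace of X of codimension two. If every bounded linear operator T : X → E with ker T = Z attains its norm, then every functional in Z^⊥ attains its norm on X. -/
set_option maxHeartbeats 1000000 in
theorem statement_8
    {X E : Type*} [NormedAddCommGroup X] [NormedSpace ℝ X] [CompleteSpace X]
    [NormedAddCommGroup E] [NormedSpace ℝ E]
    (hdimE : Module.finrank ℝ E = 2)
    (hnsc : ∃ u v : E, ‖u‖ = 1 ∧ ‖v‖ = 1 ∧ u ≠ v ∧ ‖(2 : ℝ)⁻¹ • (u + v)‖ = 1)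
    (Z : Submodule ℝ X) (hZc : IsClosed (Z : Set X))
    (hcodim : Module.finrank ℝ (X ⧸ Z) = 2)
    (hall : ∀ T : X →L[ℝ] E, LinearMap.ker (T : X →ₗ[ℝ] E) = Z →
      ∃ x : X, ‖x‖ = 1 ∧ ‖T x‖ = ‖T‖) :
    ∀ f : X →L[ℝ] ℝ, (∀ z ∈ Z, f z = 0) →
      ∃ x : X, ‖x‖ = 1 ∧ |f x| = ‖f‖ := by
  haveI := hZc
  haveI : FiniteDimensional ℝ (X ⧸ Z) := .of_finrank_eq_succ hcodim
  intro f hf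
  obtain ⟨u, v, hu, hv, huv, hmn⟩ := hnsc
  set m : E := (2 : ℝ)⁻¹ • (u + v) with hm_def
  set d : E := (2 : ℝ)⁻¹ • (u - v) with hd_def
  clear_value m d
  have hmd : m + d = u := by rw [hm_def, hd_def]; module
  have hmd' : m - d = v := by rw [hm_def, hd_def]; module
  have hd0 : d ≠ 0 := by
    intro h
    apply huv
    rw [← hmd, ← hmd', h, add_zero, sub_zero]
  -- the whole segment [v, u] lies on the unit sphere
  have hupper : ∀ t : ℝ, |t| ≤ 1 → ‖m + t • d‖ ≤ 1 := by
    intro t ht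
    have h1 : m + t • d = ((1 + t) / 2) • u + ((1 - t) / 2) • v := by
      rw [hm_def, hd_def]; module
    rw [abs_le] at ht
    calc ‖m + t • d‖ ≤ ‖((1 + t) / 2) • u‖ + ‖((1 - t) / 2) • v‖ := by
          rw [h1]; exact norm_add_le _ _
      _ = |(1 + t) / 2| * ‖u‖ + |(1 - t) / 2| * ‖v‖ := by
          rw [norm_smul, norm_smul, Real.norm_eq_abs, Real.norm_eq_abs]
      _ = 1 := by
          rw [hu, hv, abs_of_nonneg (by linarith), abs_of_nonneg (by linarith)]
          ring
  have hA : ∀ t : ℝ, |t| ≤ 1 → ‖m + t • d‖ = 1 := by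
    intro t ht
    refine le_antisymm (hupper t ht) ?_
    have h2 : (2 : ℝ) = ‖(m + t • d) + (m + (-t) • d)‖ := by
      have : (m + t • d) + (m + (-t) • d) = (2 : ℝ) • m := by module
      rw [this, norm_smul, hmn]
      norm_num
    have h3 := norm_add_le (m + t • d) (m + (-t) • d)
    have h4 := hupper (-t) (by rwa [abs_neg])
    linarith
  -- the line through the segment avoids the open unit ball
  have key : ∀ c t : ℝ, (1 - c) • m + c • (m + t • d) = m + (c * t) • d := by
    intro c t; module
  have hB : ∀ t : ℝ, 1 ≤ ‖m + t • d‖ := by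
    intro t
    rcases le_or_gt (|t|) 1 with ht | ht
    · exact (hA t ht).ge
    have habs : (0:ℝ) < |t| := lt_trans one_pos ht
    have htne : t ≠ 0 := abs_pos.mp habs
    set c : ℝ := |t|⁻¹ with hc
    have hcpos : 0 < c := inv_pos.mpr habs
    have hcle : c < 1 := by
      rw [hc, inv_lt_one_iff₀]; right; exact ht
    have hct : |c * t| = 1 := by
      rw [abs_mul, hc, abs_inv, abs_abs, inv_mul_cancel₀ (ne_of_gt habs)]
    have hnorm1 : ‖m + (c * t) • d‖ = 1 := hA (c * t) hct.le
    have h2 := norm_add_le ((1 - c) • m) (c • (m + t • d))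
    rw [key, hnorm1, norm_smul, norm_smul, Real.norm_eq_abs, Real.norm_eq_abs, hmn,
      abs_of_nonneg (by linarith : (0:ℝ) ≤ 1 - c), abs_of_pos hcpos, mul_one] at h2
    nlinarith [norm_nonneg (m + t • d)]
  have hC : ∀ α β : ℝ, |α| ≤ ‖α • m + β • d‖ := by
    intro α β
    rcases eq_or_ne α 0 with h | h
    · simp [h, norm_nonneg]
    · have hba : α * (β / α) = β := by field_simp
      have h1 : α • m + β • d = α • (m + (β / α) • d) := by
        rw [smul_add, smul_smul, hba]
      rw [h1, norm_smul, Real.norm_eq_abs]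
      nlinarith [hB (β / α), abs_nonneg α]
  have hD : ∀ α β : ℝ, |β| ≤ |α| → ‖α • m + β • d‖ = |α| := by
    intro α β hab
    rcases eq_or_ne α 0 with h | h
    · have : β = 0 := by
        rw [h, abs_zero] at hab
        exact abs_eq_zero.mp (le_antisymm hab (abs_nonneg β))
      simp [h, this]
    · have hba : α * (β / α) = β := by field_simp
      have h1 : α • m + β • d = α • (m + (β / α) • d) := by
        rw [smul_add, smul_smul, hba]
      rw [h1, norm_smul, Real.norm_eq_abs,
        hA (β / α) (by rw [abs_div]; exact div_le_one_of_le₀ hab (abs_nonneg α)), mul_one]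
  -- trivial case f = 0
  by_cases hf0 : f = 0
  · haveI : Nontrivial (X ⧸ Z) := Module.nontrivial_of_finrank_pos (R := ℝ) (by omega)
    obtain ⟨y, hy⟩ := exists_ne (0 : X ⧸ Z)
    obtain ⟨x, rfl⟩ := Submodule.Quotient.mk_surjective Z y
    have hx0 : x ≠ 0 := by rintro rfl; simp at hy
    refine ⟨(‖x‖⁻¹ : ℝ) • x, norm_smul_inv_norm hx0, ?_⟩
    simp [hf0]
  -- main case
  have hfpos : (0 : ℝ) < ‖f‖ := by
    rwa [norm_pos_iff]
  obtain ⟨x0, hx0⟩ : ∃ x0, f x0 ≠ 0 := by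
    by_contra h
    push_neg at h
    exact hf0 (ContinuousLinearMap.ext fun x => by simp [h x])
  have hx0Z : x0 ∉ Z := fun h => hx0 (hf x0 h)
  -- find w ∈ ker f \ Z
  obtain ⟨w, hwf, hwZ⟩ : ∃ w, f w = 0 ∧ w ∉ Z := by
    by_contra h
    push_neg at h
    have hker : LinearMap.ker (f : X →ₗ[ℝ] ℝ) = Z := by
      ext x
      exact ⟨fun hx => h x hx, fun hx => hf x hx⟩
    have e1 : (X ⧸ Z) ≃ₗ[ℝ] (X ⧸ LinearMap.ker (f : X →ₗ[ℝ] ℝ)) :=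
      Submodule.quotEquivOfEq _ _ hker.symm
    have e2 := (f : X →ₗ[ℝ] ℝ).quotKerEquivRange
    have h1 : Module.finrank ℝ (X ⧸ Z) = Module.finrank ℝ (LinearMap.range (f : X →ₗ[ℝ] ℝ)) :=
      (e1.trans e2).finrank_eq
    have h2 : Module.finrank ℝ (LinearMap.range (f : X →ₗ[ℝ] ℝ)) ≤ 1 := by
      simpa using Submodule.finrank_le (LinearMap.range (f : X →ₗ[ℝ] ℝ))
    omega
  -- construct g
  have hli : LinearIndependent ℝ ![Z.mkQ w, Z.mkQ x0] := by
    rw [linearIndependent_fin2]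
    constructor
    · simpa [Submodule.Quotient.mk_eq_zero] using hx0Z
    · intro a ha
      simp only [Matrix.cons_val_one, Matrix.head_cons, Matrix.cons_val_zero] at ha
      have : w - a • x0 ∈ Z := by
        rw [← Submodule.Quotient.eq]
        simpa [Submodule.Quotient.eq] using ha.symm
      have h1 : f (w - a • x0) = 0 := hf _ this
      simp only [map_sub, map_smul, hwf, smul_eq_mul, zero_sub, neg_eq_zero] at h1
      have ha0 : a = 0 := by
        rcases mul_eq_zero.mp h1 with h | h
        · exact h
        · exact absurd h hx0
      rw [ha0, zero_smul] at ha
      have : w ∈ Z := by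
        rwa [eq_comm, Submodule.mkQ_apply, Submodule.Quotient.mk_eq_zero] at ha
      exact hwZ this
  set b : Module.Basis (Fin 2) ℝ (X ⧸ Z) :=
    basisOfLinearIndependentOfCardEqFinrank hli (by simp [hcodim]) with hb_def
  have hb0 : b 0 = Z.mkQ w := by
    rw [hb_def, coe_basisOfLinearIndependentOfCardEqFinrank]
    simp
  have hb1 : b 1 = Z.mkQ x0 := by
    rw [hb_def, coe_basisOfLinearIndependentOfCardEqFinrank]
    simp
  set πL : X →L[ℝ] (X ⧸ Z) :=
    LinearMap.mkContinuous Z.mkQ 1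
      (fun x => by simpa using Submodule.Quotient.norm_mk_le Z x) with hπ_def
  set g : X →L[ℝ] ℝ := (LinearMap.toContinuousLinearMap (b.coord 0)).comp πL with hg_def
  have hgapply : ∀ x : X, g x = b.coord 0 (Z.mkQ x) := by
    intro x
    rw [hg_def]
    simp only [ContinuousLinearMap.comp_apply, LinearMap.coe_toContinuousLinearMap']
    rw [hπ_def]
    simp only [LinearMap.mkContinuous_apply]
  clear_value g πL
  have hgw : g w = 1 := by
    rw [hgapply, ← hb0]
    simp [Module.Basis.coord_apply]
  have hgZ : ∀ z ∈ Z, g z = 0 := by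
    intro z hz
    rw [hgapply]
    have : Z.mkQ z = 0 := by simpa [Submodule.Quotient.mk_eq_zero] using hz
    rw [this, map_zero]
  have hkerfg : ∀ x : X, f x = 0 → g x = 0 → x ∈ Z := by
    intro x hfx hgx
    have hrep := b.sum_repr (Z.mkQ x)
    rw [Fin.sum_univ_two] at hrep
    have h0 : b.repr (Z.mkQ x) 0 = 0 := by
      rw [hgapply] at hgx
      rwa [Module.Basis.coord_apply] at hgx
    rw [h0, zero_smul, zero_add, hb1] at hrep
    set c := b.repr (Z.mkQ x) 1 with hc
    have hxc : x - c • x0 ∈ Z := by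
      rw [← Submodule.Quotient.eq]
      simpa using hrep.symm
    have h1 : f (x - c • x0) = 0 := hf _ hxc
    simp only [map_sub, map_smul, hfx, smul_eq_mul, zero_sub, neg_eq_zero] at h1
    have hc0 : c = 0 := by
      rcases mul_eq_zero.mp h1 with h | h
      · exact h
      · exact absurd h hx0
    rw [hc0, zero_smul, sub_zero] at hxc
    exact hxc
  have hgpos : (0 : ℝ) < ‖g‖ := by
    rw [norm_pos_iff]
    intro h
    rw [h] at hgw
    simp at hgw
  have hd1 : (0:ℝ) < 1 + ‖d‖ := by positivity
  set ε : ℝ := ‖f‖ / (‖g‖ * (1 + ‖d‖)) with hε_def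
  have hεpos : 0 < ε := by positivity
  have hεid : ε * (‖g‖ * (1 + ‖d‖)) = ‖f‖ := by
    rw [hε_def]
    field_simp
  clear_value ε
  set T : X →L[ℝ] E := f.smulRight m + g.smulRight (ε • d) with hT_def
  have hTapply : ∀ x : X, T x = f x • m + (ε * g x) • d := by
    intro x
    rw [hT_def]
    simp only [ContinuousLinearMap.add_apply, ContinuousLinearMap.smulRight_apply, smul_smul]
    rw [mul_comm]
  clear_value T
  have hkerT : LinearMap.ker (T : X →ₗ[ℝ] E) = Z := by
    ext x
    simp only [LinearMap.mem_ker, ContinuousLinearMap.coe_coe]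
    constructor
    · intro hx
      have hx' : T x = 0 := hx
      rw [hTapply] at hx'
      have hfx : f x = 0 := by
        have := hC (f x) (ε * g x)
        rw [hx', norm_zero] at this
        exact abs_eq_zero.mp (le_antisymm this (abs_nonneg _))
      have hgx : g x = 0 := by
        rw [hfx, zero_smul, zero_add, smul_eq_zero] at hx'
        rcases hx' with h | h
        · rcases mul_eq_zero.mp h with h' | h'
          · exact absurd h' (ne_of_gt hεpos)
          · exact h'
        · exact absurd h hd0
      exact hkerfg x hfx hgx
    · intro hx
      show T x = 0
      rw [hTapply, hf x hx, hgZ x hx, zero_smul, mul_zero, zero_smul, add_zero]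
  -- ‖T‖ = ‖f‖
  have hTle : ‖T‖ ≤ ‖f‖ := by
    refine ContinuousLinearMap.opNorm_le_bound T (norm_nonneg f) fun x => ?_
    rw [hTapply]
    rcases le_or_gt (|ε * g x|) (|f x|) with h | h
    · rw [hD _ _ h]
      simpa [Real.norm_eq_abs] using f.le_opNorm x
    · have h1 := norm_add_le ((f x) • m) ((ε * g x) • d)
      rw [norm_smul, norm_smul, Real.norm_eq_abs, Real.norm_eq_abs, hmn, mul_one] at h1
      have h2 : |g x| ≤ ‖g‖ * ‖x‖ := by
        simpa [Real.norm_eq_abs] using g.le_opNorm x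
      have h3 : |ε * g x| = ε * |g x| := by
        rw [abs_mul, abs_of_pos hεpos]
      rw [h3] at h1 h
      calc ‖f x • m + (ε * g x) • d‖ ≤ |f x| + ε * |g x| * ‖d‖ := h1
        _ ≤ ε * |g x| + ε * |g x| * ‖d‖ := add_le_add_left h.le _
        _ = ε * |g x| * (1 + ‖d‖) := by ring
        _ ≤ ε * (‖g‖ * ‖x‖) * (1 + ‖d‖) := by gcongr
        _ = ‖f‖ * ‖x‖ := by rw [← hεid]; ring
  have hTge : ‖f‖ ≤ ‖T‖ := by
    refine ContinuousLinearMap.opNorm_le_bound f (norm_nonneg T) fun x => ?_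
    have h1 : |f x| ≤ ‖T x‖ := by
      rw [hTapply]; exact hC _ _
    calc ‖f x‖ = |f x| := Real.norm_eq_abs _
      _ ≤ ‖T x‖ := h1
      _ ≤ ‖T‖ * ‖x‖ := T.le_opNorm x
  have hTnorm : ‖T‖ = ‖f‖ := le_antisymm hTle hTge
  obtain ⟨x, hx1, hx2⟩ := hall T hkerT
  refine ⟨x, hx1, ?_⟩
  rw [hTnorm] at hx2
  rcases le_or_gt (|ε * g x|) (|f x|) with h | h
  · rw [hTapply, hD _ _ h] at hx2
    exact hx2
  · exfalso
    have h1 := norm_add_le ((f x) • m) ((ε * g x) • d)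
    rw [← hTapply, hx2, norm_smul, norm_smul, Real.norm_eq_abs, Real.norm_eq_abs,
      hmn, mul_one] at h1
    have h2 : |g x| ≤ ‖g‖ := by
      have := g.le_opNorm x
      rwa [hx1, mul_one, Real.norm_eq_abs] at this
    have h3 : |ε * g x| = ε * |g x| := by
      rw [abs_mul, abs_of_pos hεpos]
    rw [h3] at h h1
    have hchain : ‖f‖ < ε * ‖g‖ * (1 + ‖d‖) :=
      calc ‖f‖ ≤ |f x| + ε * |g x| * ‖d‖ := h1
        _ < ε * |g x| + ε * |g x| * ‖d‖ := add_lt_add_left h _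
        _ = ε * |g x| * (1 + ‖d‖) := by ring
        _ ≤ ε * ‖g‖ * (1 + ‖d‖) := by gcongr
    rw [show ε * ‖g‖ * (1 + ‖d‖) = ε * (‖g‖ * (1 + ‖d‖)) by ring, hεid] at hchain
    exact lt_irrefl _ hchain
end

section
/- Let X be a Banach space such that there is a norm-dense linear subspace of X* contained in the set of norm attaining functionals NA(X). Then for every Banach space Y, every finite rank operator T : X → Y can be approximated in operator norm by finite rank norm attaining operators. -/
set_option maxHeartbeats 1000000

open Metric Bornology

/-- Core lemma: if `G : X →L F` with `F` finite-dimensional is such that `φ ∘ G ∈ D` for every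
functional `φ` on `F`, and every member of `D` attains its norm, then `L ∘ G` attains its norm. -/
lemma core_attains {X : Type*} [NormedAddCommGroup X] [NormedSpace ℝ X]
    {Y : Type*} [NormedAddCommGroup Y] [NormedSpace ℝ Y]
    {F : Type*} [NormedAddCommGroup F] [NormedSpace ℝ F] [FiniteDimensional ℝ F]
    (D : Submodule ℝ (X →L[ℝ] ℝ))
    (hNA : ∀ f ∈ D, ∃ x : X, ‖x‖ = 1 ∧ |f x| = ‖f‖)
    (G : X →L[ℝ] F) (hG : ∀ φ : F →L[ℝ] ℝ, φ.comp G ∈ D) (L : F →L[ℝ] Y) :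
    ∃ x : X, ‖x‖ = 1 ∧ ‖(L.comp G) x‖ = ‖L.comp G‖ := by
  obtain ⟨x₀, hx₀, -⟩ := hNA 0 D.zero_mem
  set S := L.comp G with hS
  set K := closure (G '' Metric.closedBall 0 1) with hK
  have hKcompact : IsCompact K :=
    Metric.isCompact_of_isClosed_isBounded isClosed_closure
      ((G.lipschitz.isBounded_image Metric.isBounded_closedBall).closure)
  have hKne : K.Nonempty :=
    ⟨G 0, subset_closure ⟨0, Metric.mem_closedBall_self (by norm_num), rfl⟩⟩
  have hNcont : Continuous fun a : F => ‖L a‖ := L.continuous.norm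
  obtain ⟨a₀, ha₀K, ha₀max⟩ := hKcompact.exists_isMaxOn hKne hNcont.continuousOn
  -- ‖S‖ = ‖L a₀‖
  have hle1 : ‖S‖ ≤ ‖L a₀‖ := by
    apply ContinuousLinearMap.opNorm_le_of_unit_norm (norm_nonneg _)
    intro x hx
    have hx' : G x ∈ K := subset_closure ⟨x, by simp [Metric.mem_closedBall, hx.le], rfl⟩
    exact ha₀max hx'
  have hle2 : ‖L a₀‖ ≤ ‖S‖ := by
    have hKsub : K ⊆ {a : F | ‖L a‖ ≤ ‖S‖} := by
      apply closure_minimal _ (isClosed_le hNcont continuous_const)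
      rintro _ ⟨z, hz, rfl⟩
      have : ‖S z‖ ≤ ‖S‖ * ‖z‖ := S.le_opNorm z
      have hz1 : ‖z‖ ≤ 1 := by simpa [Metric.mem_closedBall] using hz
      calc ‖L (G z)‖ = ‖S z‖ := rfl
        _ ≤ ‖S‖ * ‖z‖ := this
        _ ≤ ‖S‖ * 1 := by gcongr
        _ = ‖S‖ := mul_one _
    exact hKsub ha₀K
  have hSnorm : ‖S‖ = ‖L a₀‖ := le_antisymm hle1 hle2
  by_cases hS0 : ‖S‖ = 0
  · refine ⟨x₀, hx₀, ?_⟩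
    have h1 : ‖S x₀‖ ≤ ‖S‖ * ‖x₀‖ := S.le_opNorm x₀
    rw [hS0, zero_mul] at h1
    rw [hS0]
    exact le_antisymm h1 (norm_nonneg _)
  · have hSpos : 0 < ‖S‖ := lt_of_le_of_ne (norm_nonneg _) (Ne.symm hS0)
    have ha₀ne : a₀ ≠ 0 := by
      intro h
      rw [h, map_zero, norm_zero] at hSnorm
      exact hS0 hSnorm
    -- Hahn-Banach: find a linear functional φ ≤ ‖L ·‖ with φ a₀ = ‖L a₀‖
    set f : F →ₗ.[ℝ] ℝ := LinearPMap.mkSpanSingleton a₀ (‖L a₀‖) ha₀ne with hf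
    obtain ⟨φ, hφeq, hφle⟩ := exists_extension_of_le_sublinear f (fun a => ‖L a‖)
      (fun c hc x => by
        show ‖L (c • x)‖ = c * ‖L x‖
        rw [map_smul, norm_smul, Real.norm_eq_abs, abs_of_pos hc])
      (fun x y => by
        show ‖L (x + y)‖ ≤ ‖L x‖ + ‖L y‖
        rw [map_add]; exact norm_add_le _ _)
      (by
        rintro ⟨z, hz⟩
        obtain ⟨c, rfl⟩ := Submodule.mem_span_singleton.1 hz
        have : f ⟨c • a₀, hz⟩ = c • (‖L a₀‖) := LinearPMap.mkSpanSingleton'_apply _ _ _ c _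
        rw [this]
        calc c • ‖L a₀‖ ≤ |c| * ‖L a₀‖ := by
              rw [smul_eq_mul]
              exact mul_le_mul_of_nonneg_right (le_abs_self c) (norm_nonneg _)
          _ = ‖L (c • a₀)‖ := by rw [map_smul, norm_smul, Real.norm_eq_abs])
    have hφa₀ : φ a₀ = ‖L a₀‖ := by
      have := hφeq ⟨a₀, Submodule.mem_span_singleton_self a₀⟩
      rwa [LinearPMap.mkSpanSingleton_apply] at this
    have habs : ∀ a : F, |φ a| ≤ ‖L a‖ := by
      intro a
      refine abs_le.2 ⟨?_, hφle a⟩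
      have := hφle (-a)
      rw [map_neg, map_neg, norm_neg] at this
      linarith
    set φc : F →L[ℝ] ℝ := LinearMap.toContinuousLinearMap φ with hφc
    have hφcapp : ∀ a : F, φc a = φ a := fun a => rfl
    set h : X →L[ℝ] ℝ := φc.comp G with hh
    obtain ⟨x, hx1, hx2⟩ := hNA h (hG φc)
    -- φ a₀ ≤ ‖h‖
    have hφa₀le : φ a₀ ≤ ‖h‖ := by
      have hKsub : K ⊆ {a : F | φc a ≤ ‖h‖} := by
        apply closure_minimal _ (isClosed_le φc.continuous continuous_const)
        rintro _ ⟨z, hz, rfl⟩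
        have hz1 : ‖z‖ ≤ 1 := by simpa [Metric.mem_closedBall] using hz
        calc φc (G z) = h z := rfl
          _ ≤ |h z| := le_abs_self _
          _ ≤ ‖h‖ * ‖z‖ := by simpa using h.le_opNorm z
          _ ≤ ‖h‖ * 1 := mul_le_mul_of_nonneg_left hz1 (norm_nonneg _)
          _ = ‖h‖ := mul_one _
      exact hKsub ha₀K
    refine ⟨x, hx1, ?_⟩
    have hup : ‖S x‖ ≤ ‖S‖ := by
      have := S.le_opNorm x
      rwa [hx1, mul_one] at this
    have hdown : ‖S‖ ≤ ‖S x‖ := by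
      calc ‖S‖ = ‖L a₀‖ := hSnorm
        _ = φ a₀ := hφa₀.symm
        _ ≤ ‖h‖ := hφa₀le
        _ = |h x| := hx2.symm
        _ = |φ (G x)| := rfl
        _ ≤ ‖L (G x)‖ := habs _
        _ = ‖S x‖ := rfl
    exact le_antisymm hup hdown

theorem statement_10
    {X : Type u} [NormedAddCommGroup X] [NormedSpace ℝ X] [CompleteSpace X]
    (hX : ∃ D : Submodule ℝ (X →L[ℝ] ℝ), Dense (D : Set (X →L[ℝ] ℝ)) ∧
      ∀ f ∈ D, ∃ x : X, ‖x‖ = 1 ∧ |f x| = ‖f‖) :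
    ∀ (Y : Type v) [NormedAddCommGroup Y] [NormedSpace ℝ Y] [CompleteSpace Y],
      ∀ T : X →L[ℝ] Y, FiniteDimensional ℝ ↥(LinearMap.range (T : X →ₗ[ℝ] Y)) →
        ∀ ε : ℝ, 0 < ε →
          ∃ S : X →L[ℝ] Y, FiniteDimensional ℝ ↥(LinearMap.range (S : X →ₗ[ℝ] Y)) ∧
            (∃ x : X, ‖x‖ = 1 ∧ ‖S x‖ = ‖S‖) ∧ ‖T - S‖ < ε := by
  obtain ⟨D, hD, hNA⟩ := hX
  intro Y _ _ _ T hT ε hε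
  set E := LinearMap.range (T : X →ₗ[ℝ] Y) with hE
  haveI : FiniteDimensional ℝ E := hT
  set n := Module.finrank ℝ E with hn
  let b : Module.Basis (Fin n) ℝ E := Module.finBasis ℝ E
  let Tc : X →L[ℝ] E := T.codRestrict E (fun x => LinearMap.mem_range_self _ x)
  let f : Fin n → (X →L[ℝ] ℝ) :=
    fun i => (LinearMap.toContinuousLinearMap (b.coord i)).comp Tc
  let y : Fin n → Y := fun i => ((b i : E) : Y)
  -- choose approximating functionals in D
  have hδpos : ∀ i : Fin n, (0:ℝ) < ε / (2 * (n + 1) * (‖y i‖ + 1)) := by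
    intro i
    apply div_pos hε
    positivity
  have hgex : ∀ i : Fin n, ∃ g ∈ D, ‖f i - g‖ < ε / (2 * (n + 1) * (‖y i‖ + 1)) := by
    intro i
    obtain ⟨g, hgD, hg⟩ := hD.exists_dist_lt (f i) (hδpos i)
    exact ⟨g, hgD, by rwa [dist_eq_norm] at hg⟩
  choose g hgD hgclose using hgex
  set G : X →L[ℝ] (Fin n → ℝ) := ContinuousLinearMap.pi g with hG
  set L : (Fin n → ℝ) →L[ℝ] Y :=
    ∑ i, (ContinuousLinearMap.proj i).smulRight (y i) with hL
  set S : X →L[ℝ] Y := L.comp G with hSdef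
  have hLapp : ∀ a : Fin n → ℝ, L a = ∑ i, a i • y i := by
    intro a
    simp [hL, ContinuousLinearMap.sum_apply]
  have hSapp : ∀ x : X, S x = ∑ i, g i x • y i := by
    intro x
    simp [hSdef, hLapp, hG]
  -- hypothesis for the core lemma
  have hGmem : ∀ φ : (Fin n → ℝ) →L[ℝ] ℝ, φ.comp G ∈ D := by
    intro φ
    have hrepr : φ.comp G = ∑ i, φ (Pi.single i 1) • g i := by
      ext x
      have hx : (G x) = ∑ i, Pi.single i (g i x) := by
        rw [Finset.univ_sum_single (fun i => g i x)]
        rfl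
      simp only [ContinuousLinearMap.comp_apply, hx, map_sum,
        ContinuousLinearMap.sum_apply, ContinuousLinearMap.coe_smul',
        Pi.smul_apply, smul_eq_mul]
      congr 1
      ext i
      have hsingle : (Pi.single i (g i x) : Fin n → ℝ) =
          (g i x) • (Pi.single i (1:ℝ) : Fin n → ℝ) := by
        rw [← Pi.single_smul' i (g i x) (1:ℝ), smul_eq_mul, mul_one]
      rw [hsingle, map_smul, smul_eq_mul, mul_comm]
    rw [hrepr]
    exact Submodule.sum_mem _ fun i _ => D.smul_mem _ (hgD i)
  obtain ⟨x, hx1, hx2⟩ := core_attains D hNA G hGmem L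
  refine ⟨S, ?_, ⟨x, hx1, hx2⟩, ?_⟩
  · -- finite rank
    have hsub : LinearMap.range (S : X →ₗ[ℝ] Y) ≤ LinearMap.range (L : (Fin n → ℝ) →ₗ[ℝ] Y) := by
      rintro _ ⟨v, rfl⟩
      exact ⟨G v, rfl⟩
    exact Submodule.finiteDimensional_of_le hsub
  · -- norm estimate
    have hTdecomp : ∀ x : X, T x = ∑ i, f i x • y i := by
      intro x
      have hsum := b.sum_repr (Tc x)
      have : ((Tc x : E) : Y) = ((∑ i, b.repr (Tc x) i • b i : E) : Y) := by rw [hsum]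
      rw [show T x = ((Tc x : E) : Y) from rfl, this]
      push_cast
      rfl
    have hTS : T - S = ∑ i, (f i - g i).smulRight (y i) := by
      ext x
      simp only [ContinuousLinearMap.sub_apply, ContinuousLinearMap.sum_apply,
        ContinuousLinearMap.smulRight_apply, hTdecomp x, hSapp x, sub_smul]
      rw [Finset.sum_sub_distrib]
    have hbound : ‖T - S‖ ≤ ∑ i : Fin n, ‖f i - g i‖ * ‖y i‖ := by
      rw [hTS]
      refine le_trans (norm_sum_le _ _) ?_
      apply Finset.sum_le_sum
      intro i _
      rw [ContinuousLinearMap.norm_smulRight_apply]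
    have hterm : ∀ i : Fin n, ‖f i - g i‖ * ‖y i‖ ≤ ε / (2 * (n + 1)) := by
      intro i
      have h1 : ‖f i - g i‖ * ‖y i‖ ≤ (ε / (2 * (n + 1) * (‖y i‖ + 1))) * (‖y i‖ + 1) := by
        apply mul_le_mul (hgclose i).le (by linarith [norm_nonneg (y i)]) (norm_nonneg _)
          (hδpos i).le
      have h2 : (ε / (2 * (n + 1) * (‖y i‖ + 1))) * (‖y i‖ + 1) = ε / (2 * (n + 1)) := by
        have hy : (‖y i‖ + 1) ≠ 0 := by positivity
        field_simp
      linarith [h1, h2.le]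
    have hsum : ∑ i : Fin n, ‖f i - g i‖ * ‖y i‖ ≤ (n : ℝ) * (ε / (2 * (n + 1))) := by
      calc ∑ i : Fin n, ‖f i - g i‖ * ‖y i‖ ≤ ∑ _i : Fin n, ε / (2 * (n + 1)) :=
            Finset.sum_le_sum fun i _ => hterm i
        _ = (n : ℝ) * (ε / (2 * (n + 1))) := by
            rw [Finset.sum_const, Finset.card_univ, Fintype.card_fin, nsmul_eq_mul]
    have hfinal : (n : ℝ) * (ε / (2 * (n + 1))) < ε := by
      have h1 : (n : ℝ) / (2 * ((n:ℝ) + 1)) < 1 := by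
        rw [div_lt_one (by positivity)]
        nlinarith [Nat.cast_nonneg (α := ℝ) n]
      calc (n : ℝ) * (ε / (2 * (n + 1))) = ((n:ℝ) / (2 * ((n:ℝ) + 1))) * ε := by ring
        _ < 1 * ε := mul_lt_mul_of_pos_right h1 hε
        _ = ε := one_mul ε
    linarith [hbound, hsum, hfinal]
end

section
/- For a positive measure μ, the set of simple (finitely-valued) functions in L∞(μ) is a dense linear subspace of L∞(μ) = L₁(μ)*, and every simple function, viewed as a functional on L₁(μ), attains its norm on the unit ball of L₁(μ). -/
open MeasureTheory
open scoped ENNReal NNReal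

/-- Any element of `L∞` can be approximated in `L∞`-norm by (an `L∞` element a.e. equal to)
a simple function. -/
lemma approx_by_simple {α : Type*} [MeasurableSpace α] {μ : Measure α}
    (g : Lp ℝ ⊤ μ) {ε : ℝ} (hε : 0 < ε) :
    ∃ b : Lp ℝ ⊤ μ, (∃ s : SimpleFunc α ℝ, ⇑b =ᵐ[μ] ⇑s) ∧ dist g b < ε := by
  set δ : ℝ := ε / 2 with hδdef
  have hδ : 0 < δ := by positivity
  set C : ℝ := ‖g‖ with hC
  have hC0 : 0 ≤ C := norm_nonneg g
  obtain ⟨h, hmeas, hgh⟩ : ∃ h, StronglyMeasurable h ∧ ⇑g =ᵐ[μ] h :=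
    ⟨(Lp.aestronglyMeasurable g).mk _, (Lp.aestronglyMeasurable g).stronglyMeasurable_mk,
      (Lp.aestronglyMeasurable g).ae_eq_mk⟩
  have hm : Measurable h := hmeas.measurable
  set h' : α → ℝ := fun x => max (-C) (min C (h x)) with hh'
  have hm' : Measurable h' := measurable_const.max (measurable_const.min hm)
  have hbound : ∀ x, |h' x| ≤ C := by
    intro x
    rw [abs_le]
    exact ⟨le_max_left _ _, max_le (by linarith) (min_le_left _ _)⟩
  have hgle : ∀ᵐ x ∂μ, |g x| ≤ C := by
    have hne : eLpNormEssSup (⇑g) μ ≠ ⊤ := by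
      rw [← eLpNorm_exponent_top]; exact Lp.eLpNorm_ne_top g
    filter_upwards [ae_le_eLpNormEssSup (f := ⇑g) (μ := μ)] with x hx
    have h1 : ((‖g x‖₊ : ℝ≥0∞)).toReal ≤ (eLpNormEssSup (⇑g) μ).toReal :=
      ENNReal.toReal_mono hne hx
    simpa [hC, Lp.norm_def, eLpNorm_exponent_top, Real.norm_eq_abs] using h1
  have hgh' : ⇑g =ᵐ[μ] h' := by
    filter_upwards [hgh, hgle] with x hx hxle
    rw [abs_le] at hxle
    simp only [hh', ← hx, min_eq_right hxle.2, max_eq_right hxle.1]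
  set s₀ : α → ℝ := fun x => δ * (⌊h' x / δ⌋ : ℤ) with hs₀def
  have hsm : Measurable s₀ := by
    exact measurable_const.mul (measurable_from_top.comp (hm'.div_const δ).floor)
  have hrange : (Set.range s₀).Finite := by
    have hsub : Set.range s₀ ⊆ (fun z : ℤ => δ * (z : ℝ)) '' (Set.Icc ⌊-C / δ⌋ ⌊C / δ⌋) := by
      rintro _ ⟨x, rfl⟩
      refine ⟨⌊h' x / δ⌋, ⟨Int.floor_le_floor ?_, Int.floor_le_floor ?_⟩, rfl⟩
      · have h1 := (abs_le.1 (hbound x)).1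
        gcongr
      · have h1 := (abs_le.1 (hbound x)).2
        gcongr
    exact ((Set.finite_Icc _ _).image _).subset hsub
  have happrox : ∀ x, |h' x - s₀ x| ≤ δ := by
    intro x
    have h1 := Int.sub_one_lt_floor (h' x / δ)
    have h2 := Int.floor_le (h' x / δ)
    have hc : h' x / δ * δ = h' x := div_mul_cancel₀ _ hδ.ne'
    have h2' := mul_le_mul_of_nonneg_right h2 hδ.le
    have h1' := mul_lt_mul_of_pos_right h1 hδ
    rw [abs_le]
    simp only [hs₀def]
    constructor <;> nlinarith
  have hmem : MemLp s₀ ⊤ μ := by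
    refine memLp_top_of_bound hsm.aestronglyMeasurable (C + δ)
      (Filter.Eventually.of_forall fun x => ?_)
    have h1 := happrox x
    have h2 := hbound x
    rw [abs_le] at h1 h2
    rw [Real.norm_eq_abs, abs_le]
    constructor <;> linarith
  refine ⟨hmem.toLp s₀, ⟨⟨s₀, fun c => hsm (measurableSet_singleton c), hrange⟩,
    hmem.coeFn_toLp⟩, ?_⟩
  have hdist : dist g (hmem.toLp s₀) ≤ δ := by
    rw [dist_eq_norm, Lp.norm_def]
    have hae : ⇑(g - hmem.toLp s₀) =ᵐ[μ] fun x => h' x - s₀ x := by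
      filter_upwards [Lp.coeFn_sub g (hmem.toLp s₀), hmem.coeFn_toLp, hgh'] with x h1 h2 h3
      rw [h1, Pi.sub_apply, h2, h3]
    rw [eLpNorm_congr_ae hae]
    rw [eLpNorm_exponent_top]
    have hle : eLpNormEssSup (fun x => h' x - s₀ x) μ ≤ ENNReal.ofReal δ :=
      eLpNormEssSup_le_of_ae_bound (Filter.Eventually.of_forall fun x => by
        rw [Real.norm_eq_abs]; exact happrox x)
    exact ENNReal.toReal_le_of_le_ofReal hδ.le hle
  calc dist g (hmem.toLp s₀) ≤ δ := hdist
    _ < ε := by rw [hδdef]; linarith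

theorem statement_11
    {α : Type*} [MeasurableSpace α] (μ : Measure α) [SigmaFinite μ] (hμ : μ ≠ 0) :
    ∃ D : Submodule ℝ (Lp ℝ ⊤ μ),
      (D : Set (Lp ℝ ⊤ μ)) = {g : Lp ℝ ⊤ μ | ∃ s : SimpleFunc α ℝ, ⇑g =ᵐ[μ] ⇑s} ∧
      Dense (D : Set (Lp ℝ ⊤ μ)) ∧
      ∀ g ∈ D, ∃ f : Lp ℝ 1 μ, ‖f‖ = 1 ∧ |∫ x, f x * g x ∂μ| = ‖g‖ := by
  classical
  refine ⟨{ carrier := {g : Lp ℝ ⊤ μ | ∃ s : SimpleFunc α ℝ, ⇑g =ᵐ[μ] ⇑s}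
            add_mem' := ?_
            zero_mem' := ?_
            smul_mem' := ?_ }, rfl, ?_, ?_⟩
  · rintro a b ⟨s, hs⟩ ⟨t, ht⟩
    refine ⟨s + t, (Lp.coeFn_add a b).trans ?_⟩
    filter_upwards [hs, ht] with x hx hy
    simp [hx, hy]
  · exact ⟨0, (Lp.coeFn_zero ℝ ⊤ μ).trans (Filter.Eventually.of_forall fun x => by simp)⟩
  · rintro c a ⟨s, hs⟩
    refine ⟨c • s, (Lp.coeFn_smul c a).trans ?_⟩
    filter_upwards [hs] with x hx
    simp [hx]
  · -- density
    intro g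
    rw [Metric.mem_closure_iff]
    intro ε hε
    obtain ⟨b, hb, hdist⟩ := approx_by_simple g hε
    exact ⟨b, hb, hdist⟩
  · -- norm attainment
    rintro g ⟨s, hgs⟩
    set M : ℝ := ‖g‖ with hM
    have hM0 : 0 ≤ M := norm_nonneg g
    have hMtop : eLpNorm (⇑g) ⊤ μ = ENNReal.ofReal M := by
      rw [hM, Lp.norm_def, ENNReal.ofReal_toReal (Lp.eLpNorm_ne_top g)]
    have hs_essSup : eLpNormEssSup (⇑s) μ = ENNReal.ofReal M := by
      rw [← eLpNormEssSup_congr_ae hgs, ← eLpNorm_exponent_top, hMtop]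
    have hae_le : ∀ᵐ x ∂μ, |s x| ≤ M := by
      filter_upwards [ae_le_eLpNormEssSup (f := ⇑s) (μ := μ)] with x hx
      rw [hs_essSup] at hx
      have h1 : ((‖s x‖₊ : ℝ≥0∞)).toReal ≤ (ENNReal.ofReal M).toReal :=
        ENNReal.toReal_mono ENNReal.ofReal_ne_top hx
      simpa [Real.norm_eq_abs, ENNReal.toReal_ofReal hM0] using h1
    rcases eq_or_lt_of_le hM0 with hM0' | hMpos
    · -- degenerate case ‖g‖ = 0
      have hg0 : ⇑g =ᵐ[μ] 0 := by
        have : eLpNorm (⇑g) ⊤ μ = 0 := by rw [hMtop, ← hM0', ENNReal.ofReal_zero]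
        exact (eLpNorm_eq_zero_iff (Lp.aestronglyMeasurable g) (by simp)).1 this
      obtain ⟨A, hA, -, hA0, hAtop⟩ :=
        Measure.exists_subset_measure_lt_top MeasurableSet.univ (Measure.measure_univ_pos.2 hμ)
      have hμA : (μ A).toReal ≠ 0 := (ENNReal.toReal_pos hA0.ne' hAtop.ne).ne'
      set c : ℝ := ((μ A).toReal)⁻¹ with hcdef
      have hc0 : 0 ≤ c := inv_nonneg.2 ENNReal.toReal_nonneg
      set f₀ : α → ℝ := A.indicator fun _ => c with hf₀def
      have hf₀ : Integrable f₀ μ :=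
        (integrable_indicator_iff hA).2 (integrableOn_const hAtop.ne)
      refine ⟨hf₀.toL1 f₀, ?_, ?_⟩
      · rw [L1.norm_of_fun_eq_integral_norm]
        have heq : (fun a => ‖f₀ a‖) = A.indicator fun _ => c := by
          funext x
          by_cases hx : x ∈ A
          · simp [hf₀def, Set.indicator_of_mem hx, Real.norm_eq_abs, abs_of_nonneg hc0]
          · simp [hf₀def, Set.indicator_of_notMem hx]
        rw [heq, integral_indicator_const c hA, smul_eq_mul, measureReal_def, hcdef, mul_inv_cancel₀ hμA]
      · have : ∫ x, (hf₀.toL1 f₀) x * g x ∂μ = 0 := by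
          rw [← integral_zero α ℝ (μ := μ)]
          apply integral_congr_ae
          filter_upwards [hg0] with x hx
          simp [hx]
        rw [this, ← hM0']
        simp
    · -- main case ‖g‖ > 0
      have hgt : μ {x | M < |s x|} = 0 := by
        have := hae_le
        rw [ae_iff] at this
        simpa [not_le] using this
      have hge : μ {x | M ≤ |s x|} ≠ 0 := by
        intro h0
        have hlt : ∀ᵐ x ∂μ, |s x| < M := by
          rw [ae_iff]; simpa [not_lt] using h0
        have hmemF : ∀ᵐ x ∂μ, |s x| ∈ (s.range.image fun v => |v|).filter (fun v => v < M) := by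
          filter_upwards [hlt] with x hx
          exact Finset.mem_filter.2 ⟨Finset.mem_image_of_mem _ (s.mem_range_self x), hx⟩
        rcases ((s.range.image fun v => |v|).filter (fun v => v < M)).eq_empty_or_nonempty
          with hne | hne
        · rw [hne] at hmemF
          have huniv : μ Set.univ = 0 := by
            have h2 := hmemF
            rw [ae_iff] at h2
            simpa using h2
          exact hμ (Measure.measure_univ_eq_zero.1 huniv)
        · have hmax := Finset.max'_mem _ hne
          have hM'lt : Finset.max' _ hne < M := (Finset.mem_filter.1 hmax).2
          have hbd : eLpNormEssSup (⇑s) μ ≤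
              ENNReal.ofReal (Finset.max' ((s.range.image fun v => |v|).filter
                (fun v => v < M)) hne) := by
            refine eLpNormEssSup_le_of_ae_bound ?_
            filter_upwards [hmemF] with x hx
            rw [Real.norm_eq_abs]
            exact Finset.le_max' _ _ hx
          rw [hs_essSup] at hbd
          exact absurd hbd (not_le.2 ((ENNReal.ofReal_lt_ofReal_iff hMpos).2 hM'lt))
      have hE : μ {x | |s x| = M} ≠ 0 := by
        intro h0
        apply hge
        have hsub : {x | M ≤ |s x|} ⊆ {x | |s x| = M} ∪ {x | M < |s x|} := fun x hx =>
          (eq_or_lt_of_le (show M ≤ |s x| from hx)).imp (fun h => h.symm) id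
        have h1 : μ {x | M ≤ |s x|} ≤ 0 := by
          calc μ {x | M ≤ |s x|} ≤ μ ({x | |s x| = M} ∪ {x | M < |s x|}) := measure_mono hsub
            _ ≤ μ {x | |s x| = M} + μ {x | M < |s x|} := measure_union_le _ _
            _ = 0 := by rw [h0, hgt, add_zero]
        exact le_antisymm h1 zero_le
      have hEm : MeasurableSet {x | |s x| = M} :=
        measurableSet_eq_fun s.measurable.abs measurable_const
      obtain ⟨A, hA, hAE, hA0, hAtop⟩ :=
        Measure.exists_subset_measure_lt_top hEm (pos_iff_ne_zero.2 hE)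
      have hμA : (μ A).toReal ≠ 0 := (ENNReal.toReal_pos hA0.ne' hAtop.ne).ne'
      set c : ℝ := ((μ A).toReal)⁻¹ with hcdef
      have hc0 : 0 ≤ c := inv_nonneg.2 ENNReal.toReal_nonneg
      set f₀ : α → ℝ := A.indicator fun x => c * Real.sign (s x) with hf₀def
      have key : ∀ x ∈ A, |c * Real.sign (s x)| = c ∧ (c * Real.sign (s x)) * s x = c * M := by
        intro x hx
        have hxM : |s x| = M := hAE hx
        rcases lt_trichotomy (s x) 0 with h | h | h
        · rw [Real.sign_of_neg h]
          constructor
          · rw [mul_neg_one, abs_neg, abs_of_nonneg hc0]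
          · rw [mul_neg_one, ← hxM, abs_of_neg h]; ring
        · exfalso
          rw [h, abs_zero] at hxM
          linarith
        · rw [Real.sign_of_pos h]
          constructor
          · rw [mul_one, abs_of_nonneg hc0]
          · rw [mul_one, ← hxM, abs_of_pos h]
      have hsgn : Measurable fun x => Real.sign (s x) := by
        have := (s.map Real.sign).measurable
        exact this
      have hf₀m : Measurable f₀ := (measurable_const.mul hsgn).indicator hA
      have hbnd : Integrable (A.indicator fun _ => c) μ :=
        (integrable_indicator_iff hA).2 (integrableOn_const hAtop.ne)
      have habs : (fun a => ‖f₀ a‖) = A.indicator fun _ => c := by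
        funext x
        rw [Real.norm_eq_abs]
        by_cases hx : x ∈ A
        · rw [hf₀def, Set.indicator_of_mem hx, Set.indicator_of_mem hx, (key x hx).1]
        · simp [hf₀def, Set.indicator_of_notMem hx]
      have hf₀ : Integrable f₀ μ := by
        refine hbnd.mono' hf₀m.aestronglyMeasurable (Filter.Eventually.of_forall fun x => ?_)
        exact (congrFun habs x).le
      refine ⟨hf₀.toL1 f₀, ?_, ?_⟩
      · rw [L1.norm_of_fun_eq_integral_norm, habs, integral_indicator_const c hA, smul_eq_mul,
          measureReal_def, hcdef, mul_inv_cancel₀ hμA]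
      · have h1 : ∫ x, (hf₀.toL1 f₀) x * g x ∂μ = ∫ x, f₀ x * s x ∂μ := by
          apply integral_congr_ae
          filter_upwards [hf₀.coeFn_toL1, hgs] with x hx hy
          rw [hx, hy]
        have h2 : (fun x => f₀ x * s x) = A.indicator fun _ => c * M := by
          funext x
          by_cases hx : x ∈ A
          · rw [hf₀def, Set.indicator_of_mem hx, Set.indicator_of_mem hx, (key x hx).2]
          · simp [hf₀def, Set.indicator_of_notMem hx]
        rw [h1, h2, integral_indicator_const _ hA, smul_eq_mul, measureReal_def, ← mul_assoc,
          mul_inv_cancel₀ hμA, one_mul, abs_of_pos hMpos]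
end

section
/- Let X, Y be Banach spaces and T : X → Y a bounded linear operator such that every functional in (ker T)^⊥ attains its norm on X. Then T can be approximated in operator norm by norm attaining operators whose kernels contain ker T. -/
open ContinuousLinearMap Filter

set_option maxSynthPendingDepth 2
set_option synthInstance.maxHeartbeats 1000000
set_option maxHeartbeats 4000000

section Aux
variable {X Y : Type*} [NormedAddCommGroup X] [NormedSpace ℝ X]
  [NormedAddCommGroup Y] [NormedSpace ℝ Y]

/-- One step of the Lindenstrauss–Zizler type iteration. -/
lemma step_exists (T S : X →L[ℝ] Y) (δ : ℝ) :
    ∃ P : (X →L[ℝ] Y) × X × Y × (Y →L[ℝ] ℝ),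
      (0 < δ → δ ≤ 1 → δ ^ 2 < ‖T‖ / 2 → ‖T‖ / 2 ≤ ‖S‖ →
        (∀ z ∈ LinearMap.ker (T : X →ₗ[ℝ] Y), S z = 0) →
        (‖P.2.1‖ = 1 ∧ ‖P.2.2.1‖ = 1 ∧ ‖P.2.2.2‖ = 1 ∧
         (∀ z ∈ LinearMap.ker (T : X →ₗ[ℝ] Y), P.1 z = 0) ∧
         ‖P.1 - S‖ ≤ δ ∧
         ‖S‖ - δ ^ 2 ≤ ‖S P.2.1‖ ∧
         P.2.2.2 (S P.2.1) = ‖S P.2.1‖ ∧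
         (∃ t : ℝ, 0 ≤ t ∧ t ≤ 1 ∧ 1 - (2 / ‖T‖) * δ ^ 2 ≤ t ∧
            P.1 P.2.1 = (‖S P.2.1‖ + δ * t) • P.2.2.1) ∧
         (∀ y' : Y →L[ℝ] ℝ, ‖y'‖ ≤ 1 →
            ‖y'.comp P.1‖ ≤ ‖S‖ + δ * |y' P.2.2.1|))) := by
  by_cases hc : 0 < δ ∧ δ ^ 2 < ‖T‖ / 2 ∧ ‖T‖ / 2 ≤ ‖S‖
  swap
  · exact ⟨(0, 0, 0, 0), fun h1 _ h3 h4 _ => absurd ⟨h1, h3, h4⟩ hc⟩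
  obtain ⟨hδ, hδ2, hTS⟩ := hc
  have hT0 : 0 < ‖T‖ := by nlinarith [sq_nonneg δ]
  have hS0 : 0 < ‖S‖ := by linarith
  have hr0 : 0 < ‖S‖ - δ ^ 2 := by nlinarith
  have hr : ‖S‖ - δ ^ 2 < ‖S‖ := by nlinarith
  obtain ⟨x, hx1, hx2⟩ := S.exists_lt_apply_of_lt_opNorm hr
  have hx0 : x ≠ 0 := by
    rintro rfl
    rw [map_zero, norm_zero] at hx2; linarith
  have hxpos : 0 < ‖x‖ := norm_pos_iff.mpr hx0
  have hinv : 1 ≤ ‖x‖⁻¹ := (one_le_inv₀ hxpos).mpr hx1.le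
  obtain ⟨u, hu, hSu⟩ : ∃ u : X, ‖u‖ = 1 ∧ ‖S‖ - δ ^ 2 < ‖S u‖ := by
    refine ⟨(‖x‖⁻¹ : ℝ) • x, norm_smul_inv_norm (𝕜 := ℝ) hx0, ?_⟩
    have h1 : S ((‖x‖⁻¹ : ℝ) • x) = (‖x‖⁻¹ : ℝ) • S x := by rw [map_smul]
    rw [h1, norm_smul, Real.norm_eq_abs, abs_of_pos (by positivity)]
    nlinarith [norm_nonneg (S x)]
  have hSu0 : S u ≠ 0 := by
    intro h; rw [h, norm_zero] at hSu; linarith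
  have hSunorm : (0:ℝ) < ‖S u‖ := norm_pos_iff.mpr hSu0
  obtain ⟨yd, hyd1, hyd2⟩ := exists_dual_vector ℝ (S u) (norm_ne_zero_iff.mpr hSu0)
  obtain ⟨w, hw, hSuw⟩ : ∃ w : Y, ‖w‖ = 1 ∧ (‖S u‖ : ℝ) • w = S u :=
    ⟨(‖S u‖⁻¹ : ℝ) • (S u), norm_smul_inv_norm (𝕜 := ℝ) hSu0,
      smul_inv_smul₀ (norm_ne_zero_iff.mpr hSu0) _⟩
  set h : X →L[ℝ] ℝ := (‖S‖⁻¹ : ℝ) • (yd.comp S) with hh_def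
  have hh_norm : ‖h‖ ≤ 1 := by
    have e1 : ‖h‖ = ‖S‖⁻¹ * ‖yd.comp S‖ := by
      rw [hh_def, norm_smul, Real.norm_eq_abs, abs_of_nonneg (by positivity)]
    rw [e1]
    calc ‖S‖⁻¹ * ‖yd.comp S‖ ≤ ‖S‖⁻¹ * (‖yd‖ * ‖S‖) :=
          mul_le_mul_of_nonneg_left (opNorm_comp_le _ _) (by positivity)
      _ = 1 := by rw [hyd1, one_mul, inv_mul_cancel₀ hS0.ne']
  have hhu : h u = ‖S‖⁻¹ * ‖S u‖ := by
    rw [hh_def]; simp [hyd2]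
  have hSu_le : ‖S u‖ ≤ ‖S‖ := by
    calc ‖S u‖ ≤ ‖S‖ * ‖u‖ := S.le_opNorm u
      _ = ‖S‖ := by rw [hu, mul_one]
  have ht0 : 0 ≤ h u := by rw [hhu]; positivity
  have ht1 : h u ≤ 1 := by
    rw [hhu]
    calc ‖S‖⁻¹ * ‖S u‖ ≤ ‖S‖⁻¹ * ‖S‖ :=
          mul_le_mul_of_nonneg_left hSu_le (by positivity)
      _ = 1 := inv_mul_cancel₀ hS0.ne'
  have hinvS : ‖S‖⁻¹ ≤ 2 / ‖T‖ := by
    have h1 : (‖T‖ / 2)⁻¹ = 2 / ‖T‖ := by rw [inv_div]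
    calc ‖S‖⁻¹ ≤ (‖T‖ / 2)⁻¹ := by
          apply inv_anti₀ (by positivity) hTS
      _ = 2 / ‖T‖ := h1
  have ht2 : 1 - (2 / ‖T‖) * δ ^ 2 ≤ h u := by
    rw [hhu]
    have h1 : ‖S‖⁻¹ * (‖S‖ - δ ^ 2) ≤ ‖S‖⁻¹ * ‖S u‖ :=
      mul_le_mul_of_nonneg_left (by linarith) (by positivity)
    have h2 : ‖S‖⁻¹ * (‖S‖ - δ ^ 2) = 1 - ‖S‖⁻¹ * δ ^ 2 := by
      field_simp
    have h3 : ‖S‖⁻¹ * δ ^ 2 ≤ (2 / ‖T‖) * δ ^ 2 :=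
      mul_le_mul_of_nonneg_right hinvS (by positivity)
    linarith
  set S' : X →L[ℝ] Y := S + h.smulRight (δ • w) with hS'_def
  have hδw : ‖δ • w‖ = δ := by
    rw [norm_smul, Real.norm_eq_abs, abs_of_pos hδ, hw, mul_one]
  refine ⟨(S', u, w, yd), fun _ _ _ _ hker =>
    ⟨hu, hw, hyd1, ?_, ?_, by linarith, hyd2, ⟨h u, ht0, ht1, ht2, ?_⟩, ?_⟩⟩
  · intro z hz
    have hSz : S z = 0 := hker z hz
    have hhz : h z = 0 := by rw [hh_def]; simp [hSz]
    rw [hS'_def]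
    simp [hhz, hSz]
  · have e1 : S' - S = h.smulRight (δ • w) := by rw [hS'_def]; abel
    rw [e1, norm_smulRight_apply, hδw]
    calc ‖h‖ * δ ≤ 1 * δ := by gcongr
      _ = δ := one_mul δ
  · have key : ∀ c : ℝ, c • w = S u → S' u = (c + δ * h u) • w := by
      intro c hc
      rw [hS'_def]
      simp only [add_apply, smulRight_apply]
      rw [← hc, smul_smul, ← add_smul]
      ring_nf
    exact key ‖S u‖ hSuw
  · intro y' hy'
    have hcomp : y'.comp S' = y'.comp S + (δ * y' w) • h := by
      ext v
      rw [hS'_def]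
      simp only [comp_apply, add_apply, smulRight_apply, map_add, map_smul, smul_eq_mul,
        ContinuousLinearMap.smul_apply, ContinuousLinearMap.add_apply]
      ring
    have hsm : ‖(δ * y' w) • h‖ = |δ * y' w| * ‖h‖ := by
      rw [norm_smul, Real.norm_eq_abs]
    calc ‖y'.comp S'‖ ≤ ‖y'.comp S‖ + ‖(δ * y' w) • h‖ := by
          rw [hcomp]; exact norm_add_le _ _
      _ ≤ ‖y'‖ * ‖S‖ + |δ * y' w| * ‖h‖ := by
          rw [hsm]; gcongr
          exact opNorm_comp_le _ _
      _ ≤ 1 * ‖S‖ + (δ * |y' w|) * 1 := by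
          rw [abs_mul, abs_of_pos hδ]
          gcongr
      _ = ‖S‖ + δ * |y' w| := by ring
/-- The chosen step data. -/
noncomputable def stepF (T S : X →L[ℝ] Y) (δ : ℝ) : (X →L[ℝ] Y) × X × Y × (Y →L[ℝ] ℝ) :=
  Classical.choose (step_exists T S δ)

lemma stepF_spec (T S : X →L[ℝ] Y) (δ : ℝ) :
    (0 < δ → δ ≤ 1 → δ ^ 2 < ‖T‖ / 2 → ‖T‖ / 2 ≤ ‖S‖ →
        (∀ z ∈ LinearMap.ker (T : X →ₗ[ℝ] Y), S z = 0) →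
        (‖(stepF T S δ).2.1‖ = 1 ∧ ‖(stepF T S δ).2.2.1‖ = 1 ∧ ‖(stepF T S δ).2.2.2‖ = 1 ∧
         (∀ z ∈ LinearMap.ker (T : X →ₗ[ℝ] Y), (stepF T S δ).1 z = 0) ∧
         ‖(stepF T S δ).1 - S‖ ≤ δ ∧
         ‖S‖ - δ ^ 2 ≤ ‖S (stepF T S δ).2.1‖ ∧
         (stepF T S δ).2.2.2 (S (stepF T S δ).2.1) = ‖S (stepF T S δ).2.1‖ ∧
         (∃ t : ℝ, 0 ≤ t ∧ t ≤ 1 ∧ 1 - (2 / ‖T‖) * δ ^ 2 ≤ t ∧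
            (stepF T S δ).1 (stepF T S δ).2.1
              = (‖S (stepF T S δ).2.1‖ + δ * t) • (stepF T S δ).2.2.1) ∧
         (∀ y' : Y →L[ℝ] ℝ, ‖y'‖ ≤ 1 →
            ‖y'.comp (stepF T S δ).1‖ ≤ ‖S‖ + δ * |y' (stepF T S δ).2.2.1|))) :=
  Classical.choose_spec (step_exists T S δ)

/-- The iteration. -/
noncomputable def chain (T : X →L[ℝ] Y) (d : ℕ → ℝ) : ℕ → (X →L[ℝ] Y) :=
  fun n => Nat.rec T (fun j Sj => (stepF T Sj (d j)).1) n

@[simp] lemma chain_zero (T : X →L[ℝ] Y) (d : ℕ → ℝ) : chain T d 0 = T := rfl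

lemma chain_succ (T : X →L[ℝ] Y) (d : ℕ → ℝ) (j : ℕ) :
    chain T d (j + 1) = (stepF T (chain T d j) (d j)).1 := rfl

end Aux

theorem statement_12
    {X Y : Type*} [NormedAddCommGroup X] [NormedSpace ℝ X] [CompleteSpace X]
    [NormedAddCommGroup Y] [NormedSpace ℝ Y] [CompleteSpace Y]
    (T : X →L[ℝ] Y)
    (hNA : ∀ f : X →L[ℝ] ℝ, (∀ z ∈ LinearMap.ker (T : X →ₗ[ℝ] Y), f z = 0) →
      ∃ x : X, ‖x‖ = 1 ∧ |f x| = ‖f‖) :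
    ∀ ε : ℝ, 0 < ε → ∃ S : X →L[ℝ] Y,
      (∃ x : X, ‖x‖ = 1 ∧ ‖S x‖ = ‖S‖) ∧
      LinearMap.ker (T : X →ₗ[ℝ] Y) ≤ LinearMap.ker (S : X →ₗ[ℝ] Y) ∧ ‖T - S‖ < ε := by
  intro ε hε
  by_cases hTε : ‖T‖ < ε
  · -- trivial case : S = 0
    obtain ⟨x, hx1, -⟩ := hNA 0 (by simp)
    refine ⟨0, ⟨x, hx1, by simp⟩, ?_, by simpa using hTε⟩
    intro z _
    simp
  push_neg at hTε
  have hT0 : 0 < ‖T‖ := lt_of_lt_of_le hε hTε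
  -- the sequence of step sizes
  set d : ℕ → ℝ := fun j => Nat.rec (min ε 1 / 8) (fun _ x => x ^ 2 / 4) j with hd_def
  have hd0 : d 0 = min ε 1 / 8 := rfl
  have hdsucc : ∀ j, d (j + 1) = (d j) ^ 2 / 4 := fun _ => rfl
  have hd0pos : 0 < d 0 := by rw [hd0]; positivity
  have hd0le : d 0 ≤ 1 / 8 := by
    rw [hd0]
    have := min_le_right ε 1
    linarith
  have hd0ε : d 0 ≤ ε / 8 := by
    rw [hd0]
    have := min_le_left ε 1
    linarith
  have hd0T : d 0 ≤ ‖T‖ / 8 := le_trans hd0ε (by linarith)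
  have hdpos : ∀ j, 0 < d j := by
    intro j; induction j with
    | zero => exact hd0pos
    | succ j ih => rw [hdsucc]; positivity
  have hdled0 : ∀ j, d j ≤ d 0 := by
    intro j; induction j with
    | zero => exact le_rfl
    | succ j ih => rw [hdsucc]; nlinarith [hdpos j]
  have hdle1 : ∀ j, d j ≤ 1 := fun j => le_trans (hdled0 j) (by linarith)
  have hdhalf : ∀ j, d (j + 1) ≤ d j / 2 := by
    intro j; rw [hdsucc]; nlinarith [hdpos j, hdle1 j]
  -- the invariant
  have hcond : ∀ j, (∀ z ∈ LinearMap.ker (T : X →ₗ[ℝ] Y), chain T d j z = 0) ∧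
      ‖chain T d j - T‖ ≤ 2 * d 0 - 2 * d j := by
    intro j; induction j with
    | zero =>
      refine ⟨fun z hz => LinearMap.mem_ker.mp hz, by simp⟩
    | succ j ih =>
      obtain ⟨ihk, ihn⟩ := ih
      have c1 : 0 < d j := hdpos j
      have c2 : d j ≤ 1 := hdle1 j
      have c3 : (d j) ^ 2 < ‖T‖ / 2 := by nlinarith [hdpos j, hdled0 j]
      have c4 : ‖T‖ / 2 ≤ ‖chain T d j‖ := by
        have h1 : ‖T‖ - ‖chain T d j‖ ≤ ‖chain T d j - T‖ := by
          rw [norm_sub_rev]; exact norm_sub_norm_le _ _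
        nlinarith [hdpos j]
      have P := stepF_spec T (chain T d j) (d j) c1 c2 c3 c4 ihk
      refine ⟨?_, ?_⟩
      · rw [chain_succ]; exact P.2.2.2.1
      · have h5 : ‖chain T d (j + 1) - chain T d j‖ ≤ d j := by
          rw [chain_succ]; exact P.2.2.2.2.1
        have h6 : ‖chain T d (j + 1) - T‖ ≤
            ‖chain T d (j + 1) - chain T d j‖ + ‖chain T d j - T‖ := by
          calc ‖chain T d (j + 1) - T‖
              = ‖(chain T d (j + 1) - chain T d j) + (chain T d j - T)‖ := by
                rw [sub_add_sub_cancel]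
            _ ≤ _ := norm_add_le _ _
        have h7 := hdhalf j
        linarith
  -- conditions, always available
  have hcnds : ∀ j, 0 < d j ∧ d j ≤ 1 ∧ (d j) ^ 2 < ‖T‖ / 2 ∧ ‖T‖ / 2 ≤ ‖chain T d j‖ := by
    intro j
    refine ⟨hdpos j, hdle1 j, by nlinarith [hdpos j, hdled0 j], ?_⟩
    have h1 : ‖T‖ - ‖chain T d j‖ ≤ ‖chain T d j - T‖ := by
      rw [norm_sub_rev]; exact norm_sub_norm_le _ _
    have h2 := (hcond j).2
    nlinarith [hdpos j]
  -- step data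
  set u : ℕ → X := fun j => (stepF T (chain T d j) (d j)).2.1 with hu_def
  set wv : ℕ → Y := fun j => (stepF T (chain T d j) (d j)).2.2.1 with hwv_def
  set yv : ℕ → (Y →L[ℝ] ℝ) := fun j => (stepF T (chain T d j) (d j)).2.2.2 with hyv_def
  have hstep : ∀ j, ‖u j‖ = 1 ∧ ‖wv j‖ = 1 ∧ ‖yv j‖ = 1 ∧
      (∀ z ∈ LinearMap.ker (T : X →ₗ[ℝ] Y), chain T d (j + 1) z = 0) ∧
      ‖chain T d (j + 1) - chain T d j‖ ≤ d j ∧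
      ‖chain T d j‖ - (d j) ^ 2 ≤ ‖chain T d j (u j)‖ ∧
      yv j (chain T d j (u j)) = ‖chain T d j (u j)‖ ∧
      (∃ t : ℝ, 0 ≤ t ∧ t ≤ 1 ∧ 1 - (2 / ‖T‖) * (d j) ^ 2 ≤ t ∧
        chain T d (j + 1) (u j) = (‖chain T d j (u j)‖ + d j * t) • wv j) ∧
      (∀ y' : Y →L[ℝ] ℝ, ‖y'‖ ≤ 1 →
        ‖y'.comp (chain T d (j + 1))‖ ≤ ‖chain T d j‖ + d j * |y' (wv j)|) := by
    intro j
    obtain ⟨c1, c2, c3, c4⟩ := hcnds j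
    exact stepF_spec T (chain T d j) (d j) c1 c2 c3 c4 (hcond j).1
  choose tt htt0 htt1 htt2 htt3 using fun j => (hstep j).2.2.2.2.2.2.2.1
  -- norms of the chain
  have ha_ub : ∀ j, ‖chain T d j‖ ≤ 2 * ‖T‖ := by
    intro j
    have h1 : ‖chain T d j‖ - ‖T‖ ≤ ‖chain T d j - T‖ := norm_sub_norm_le _ _
    have h2 := (hcond j).2
    nlinarith [hdpos j]
  have ha_succ_ub : ∀ j, ‖chain T d (j + 1)‖ ≤ ‖chain T d j‖ + d j := by
    intro j
    have h1 : ‖chain T d (j + 1)‖ - ‖chain T d j‖ ≤ ‖chain T d (j + 1) - chain T d j‖ :=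
      norm_sub_norm_le _ _
    have h2 := (hstep j).2.2.2.2.1
    linarith
  have hc_lb : ∀ j, ‖chain T d j‖ + d j - (1 + 2 / ‖T‖) * (d j) ^ 2 ≤
      ‖chain T d j (u j)‖ + d j * tt j := by
    intro j
    have h1 := (hstep j).2.2.2.2.2.1
    have h2 := htt2 j
    have h3 := hdpos j
    have h4 := hdle1 j
    have h5 : (0:ℝ) ≤ 2 / ‖T‖ * (d j) ^ 2 := by positivity
    nlinarith [mul_le_mul_of_nonneg_left h4 h5]
  have hcu_ub : ∀ j, ‖chain T d j (u j)‖ + d j * tt j ≤ ‖chain T d j‖ + d j := by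
    intro j
    have h1 : ‖chain T d j (u j)‖ ≤ ‖chain T d j‖ * ‖u j‖ := le_opNorm _ _
    rw [(hstep j).1, mul_one] at h1
    have h2 := htt1 j
    have h3 := hdpos j
    nlinarith
  have hcu_nonneg : ∀ j, 0 ≤ ‖chain T d j (u j)‖ + d j * tt j := by
    intro j
    have := htt0 j
    have := hdpos j
    positivity
  have ha_succ_lb : ∀ j, ‖chain T d j‖ + d j - (1 + 2 / ‖T‖) * (d j) ^ 2 ≤
      ‖chain T d (j + 1)‖ := by
    intro j
    have h1 := htt3 j
    have h2 : ‖chain T d (j + 1) (u j)‖ = ‖chain T d j (u j)‖ + d j * tt j := by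
      rw [h1, norm_smul, Real.norm_eq_abs, abs_of_nonneg (hcu_nonneg j), (hstep j).2.1, mul_one]
    have h3 : ‖chain T d (j + 1) (u j)‖ ≤ ‖chain T d (j + 1)‖ * ‖u j‖ := le_opNorm _ _
    rw [(hstep j).1, mul_one] at h3
    have := hc_lb j
    linarith
  -- telescoping
  have htele : ∀ j n, ‖chain T d (j + n) - chain T d j‖ ≤ 2 * d j - 2 * d (j + n) := by
    intro j n; induction n with
    | zero => simp
    | succ n ih =>
      have h5 := (hstep (j + n)).2.2.2.2.1
      have h6 : ‖chain T d (j + n + 1) - chain T d j‖ ≤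
          ‖chain T d (j + n + 1) - chain T d (j + n)‖ + ‖chain T d (j + n) - chain T d j‖ := by
        calc ‖chain T d (j + n + 1) - chain T d j‖
            = ‖(chain T d (j + n + 1) - chain T d (j + n)) + (chain T d (j + n) - chain T d j)‖ := by
              rw [sub_add_sub_cancel]
          _ ≤ _ := norm_add_le _ _
      have h7 := hdhalf (j + n)
      have h8 : j + (n + 1) = j + n + 1 := rfl
      rw [h8]
      linarith
  have hteleLe : ∀ j m, j ≤ m → ‖chain T d m - chain T d j‖ ≤ 2 * d j - 2 * d m := by
    intro j m h
    obtain ⟨n, rfl⟩ := Nat.exists_eq_add_of_le h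
    exact htele j n
  -- Cauchy sequence and limit
  have hgeo : ∀ j, d j ≤ d 0 * (1 / 2) ^ j := by
    intro j; induction j with
    | zero => simp
    | succ j ih =>
      have h1 := hdhalf j
      have h2 : d 0 * (1 / 2 : ℝ) ^ (j + 1) = (d 0 * (1 / 2) ^ j) / 2 := by ring
      rw [h2]
      linarith
  have hdtend : Filter.Tendsto d atTop (nhds 0) := by
    apply squeeze_zero (fun j => (hdpos j).le) hgeo
    have h1 : Filter.Tendsto (fun j : ℕ => (1 / 2 : ℝ) ^ j) atTop (nhds 0) :=
      tendsto_pow_atTop_nhds_zero_of_lt_one (by norm_num) (by norm_num)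
    have h2 := h1.const_mul (d 0)
    simpa using h2
  have hcauchy : CauchySeq (chain T d) := by
    apply cauchySeq_of_le_tendsto_0 (fun N => 4 * d N)
    · intro n m N hn hm
      rw [dist_eq_norm]
      have h1 : ‖chain T d n - chain T d m‖ ≤
          ‖chain T d n - chain T d N‖ + ‖chain T d N - chain T d m‖ := by
        calc ‖chain T d n - chain T d m‖
            = ‖(chain T d n - chain T d N) + (chain T d N - chain T d m)‖ := by
              rw [sub_add_sub_cancel]
          _ ≤ _ := norm_add_le _ _
      have h2 := hteleLe N n hn
      have h3 := hteleLe N m hm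
      rw [norm_sub_rev (chain T d N)] at h1
      linarith [hdpos n, hdpos m]
    · simpa using hdtend.const_mul (4 : ℝ)
  obtain ⟨S, hS⟩ := cauchySeq_tendsto_of_complete hcauchy
  have hSj : ∀ j, ‖S - chain T d j‖ ≤ 2 * d j := by
    intro j
    have h1 : Filter.Tendsto (fun m => ‖chain T d m - chain T d j‖) atTop
        (nhds ‖S - chain T d j‖) := (hS.sub tendsto_const_nhds).norm
    apply le_of_tendsto h1
    filter_upwards [eventually_ge_atTop j] with m hm
    have := hteleLe j m hm
    linarith [hdpos m]
  have hTS : ‖T - S‖ < ε := by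
    have h1 : ‖S - chain T d 0‖ ≤ 2 * d 0 := hSj 0
    rw [chain_zero] at h1
    rw [norm_sub_rev]
    linarith
  have hkerS : ∀ z ∈ LinearMap.ker (T : X →ₗ[ℝ] Y), S z = 0 := by
    intro z hz
    have h2 : ∀ j, ‖S z‖ ≤ 2 * d j * ‖z‖ := by
      intro j
      have e1 : (S - chain T d j) z = S z := by
        rw [ContinuousLinearMap.sub_apply, (hcond j).1 z hz, sub_zero]
      calc ‖S z‖ = ‖(S - chain T d j) z‖ := by rw [e1]
        _ ≤ ‖S - chain T d j‖ * ‖z‖ := le_opNorm _ _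
        _ ≤ 2 * d j * ‖z‖ := mul_le_mul_of_nonneg_right (hSj j) (norm_nonneg z)
    have h3 : Filter.Tendsto (fun j => 2 * d j * ‖z‖) atTop (nhds 0) := by
      have := (hdtend.const_mul (2 : ℝ)).mul_const ‖z‖
      simpa using this
    have h4 : ‖S z‖ ≤ 0 := ge_of_tendsto h3 (Filter.Eventually.of_forall h2)
    exact norm_le_zero_iff.mp h4
  have hSa : ∀ j, ‖S‖ ≤ ‖chain T d j‖ + d j + (d j) ^ 2 := by
    intro j
    have h1 : ‖S‖ ≤ ‖chain T d (j + 1)‖ + ‖S - chain T d (j + 1)‖ := by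
      calc ‖S‖ = ‖chain T d (j + 1) + (S - chain T d (j + 1))‖ := by
            rw [add_sub_cancel]
        _ ≤ _ := norm_add_le _ _
    have h2 := hSj (j + 1)
    have h3 := hdsucc j
    have h4 := ha_succ_ub j
    nlinarith [hdpos j]
  -- weak-* cluster point of the norming functionals
  set yw : ℕ → WeakDual ℝ Y := fun m => StrongDual.toWeakDual (yv m) with hyw_def
  have hKc : IsCompact (WeakDual.toStrongDual ⁻¹'
      Metric.closedBall (0 : StrongDual ℝ Y) 1) :=
    WeakDual.isCompact_closedBall (𝕜 := ℝ) (E := Y) 0 1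
  have hmem : ∀ m, yw m ∈ WeakDual.toStrongDual ⁻¹'
      Metric.closedBall (0 : StrongDual ℝ Y) 1 := by
    intro m
    have h1 : ‖yv m‖ ≤ 1 := le_of_eq (hstep m).2.2.1
    exact Set.mem_preimage.mpr (mem_closedBall_zero_iff.mpr h1)
  obtain ⟨yc, hycK, hclust⟩ := hKc.exists_clusterPt (f := Filter.map yw atTop)
    (le_principal_iff.mpr (Filter.mem_map.mpr (Filter.Eventually.of_forall hmem)))
  set yl : Y →L[ℝ] ℝ := WeakDual.toStrongDual yc with hyl_def
  have hyl1 : ‖yl‖ ≤ 1 := mem_closedBall_zero_iff.mp (Set.mem_preimage.mp hycK)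
  -- alignment of later norming functionals with earlier directions
  have halign : ∀ j m, j + 1 ≤ m → 1 - (2 + 2 / ‖T‖) * d j ≤ |yv m (wv j)| := by
    intro j m hjm
    have e0 : ‖chain T d m‖ - (d m) ^ 2 ≤ ‖(yv m).comp (chain T d m)‖ := by
      have h1 := (hstep m).2.2.2.2.2.2.1
      have h2 := (hstep m).2.2.2.2.2.1
      have h4 : ‖((yv m).comp (chain T d m)) (u m)‖ ≤ ‖(yv m).comp (chain T d m)‖ * ‖u m‖ :=
        le_opNorm _ _
      rw [(hstep m).1, mul_one] at h4
      have h5 : ‖((yv m).comp (chain T d m)) (u m)‖ = ‖chain T d m (u m)‖ := by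
        rw [comp_apply, h1]
        simp
      linarith
    have e1 : ‖chain T d m - chain T d (j + 1)‖ ≤ 2 * d (j + 1) - 2 * d m :=
      hteleLe (j + 1) m hjm
    have e2 : ‖chain T d (j + 1)‖ - ‖chain T d m‖ ≤ 2 * d (j + 1) - 2 * d m := by
      have := norm_sub_norm_le (chain T d (j + 1)) (chain T d m)
      rw [norm_sub_rev] at e1
      linarith [e1]
    have e3 : ‖(yv m).comp (chain T d m)‖ - ‖(yv m).comp (chain T d (j + 1))‖ ≤
        2 * d (j + 1) - 2 * d m := by
      have h5 : (yv m).comp (chain T d m) - (yv m).comp (chain T d (j + 1)) =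
          (yv m).comp (chain T d m - chain T d (j + 1)) := by
        rw [ContinuousLinearMap.comp_sub]
      have h6 : ‖(yv m).comp (chain T d m) - (yv m).comp (chain T d (j + 1))‖ ≤
          ‖yv m‖ * ‖chain T d m - chain T d (j + 1)‖ := by
        rw [h5]; exact opNorm_comp_le _ _
      rw [(hstep m).2.2.1, one_mul] at h6
      have h7 := norm_sub_norm_le ((yv m).comp (chain T d m)) ((yv m).comp (chain T d (j + 1)))
      linarith
    have e4 : ‖(yv m).comp (chain T d (j + 1))‖ ≤ ‖chain T d j‖ + d j * |yv m (wv j)| :=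
      (hstep j).2.2.2.2.2.2.2.2 (yv m) (le_of_eq (hstep m).2.2.1)
    have e5 := ha_succ_lb j
    have e6 : 4 * d (j + 1) = (d j) ^ 2 := by rw [hdsucc]; ring
    have e7 : (d m) ^ 2 ≤ 4 * d m := by nlinarith [hdpos m, hdle1 m]
    have key : d j * (1 - (2 + 2 / ‖T‖) * d j) ≤ d j * |yv m (wv j)| := by
      nlinarith [hdpos j]
    exact le_of_mul_le_mul_left key (hdpos j)
  -- transfer to the cluster point
  have hwcl : ∀ j, 1 - (2 + 2 / ‖T‖) * d j ≤ |yl (wv j)| := by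
    intro j
    have hCclosed : IsClosed {z : WeakDual ℝ Y | 1 - (2 + 2 / ‖T‖) * d j ≤ ‖z (wv j)‖} :=
      isClosed_Ici.preimage ((WeakBilin.eval_continuous _ (wv j)).norm)
    have hCin : ∀ᶠ m in atTop, yw m ∈ {z : WeakDual ℝ Y | 1 - (2 + 2 / ‖T‖) * d j ≤ ‖z (wv j)‖} := by
      filter_upwards [eventually_ge_atTop (j + 1)] with m hm
      show 1 - (2 + 2 / ‖T‖) * d j ≤ ‖yv m (wv j)‖
      rw [Real.norm_eq_abs]
      exact halign j m hm
    have hle2 : Filter.map yw atTop ≤ 𝓟 {z : WeakDual ℝ Y | 1 - (2 + 2 / ‖T‖) * d j ≤ ‖z (wv j)‖} :=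
      le_principal_iff.mpr (Filter.mem_map.mpr hCin)
    have h1 : ClusterPt yc (𝓟 {z : WeakDual ℝ Y | 1 - (2 + 2 / ‖T‖) * d j ≤ ‖z (wv j)‖}) :=
      hclust.mono hle2
    have h2 : yc ∈ {z : WeakDual ℝ Y | 1 - (2 + 2 / ‖T‖) * d j ≤ ‖z (wv j)‖} := by
      rw [← hCclosed.closure_eq]
      exact mem_closure_iff_clusterPt.mpr h1
    show 1 - (2 + 2 / ‖T‖) * d j ≤ |yc (wv j)|
    simpa [Real.norm_eq_abs] using h2
  -- the final estimate
  have hfinal : ∀ j, ‖S‖ ≤ ‖yl.comp S‖ +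
      (2 + (1 + 2 / ‖T‖) + (2 + 2 / ‖T‖) * (2 * ‖T‖ + 1)) * d j := by
    intro j
    have q0 : |yl (wv j)| ≤ 1 := by
      have h1 : ‖yl (wv j)‖ ≤ ‖yl‖ * ‖wv j‖ := le_opNorm _ _
      rw [(hstep j).2.1, mul_one] at h1
      rw [← Real.norm_eq_abs]
      linarith
    have q1 : |yl (S (u j))| ≤ ‖yl.comp S‖ := by
      have h1 : ‖(yl.comp S) (u j)‖ ≤ ‖yl.comp S‖ * ‖u j‖ := le_opNorm _ _
      rw [(hstep j).1, mul_one] at h1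
      rw [← Real.norm_eq_abs]
      exact h1
    have q2 : |yl (S (u j)) - yl (chain T d (j + 1) (u j))| ≤ (d j) ^ 2 := by
      have h1 : yl (S (u j)) - yl (chain T d (j + 1) (u j)) =
          yl ((S - chain T d (j + 1)) (u j)) := by
        rw [ContinuousLinearMap.sub_apply, map_sub]
      rw [h1]
      have h2 : ‖yl ((S - chain T d (j + 1)) (u j))‖ ≤
          ‖yl‖ * ‖(S - chain T d (j + 1)) (u j)‖ := le_opNorm _ _
      have h3 : ‖(S - chain T d (j + 1)) (u j)‖ ≤ ‖S - chain T d (j + 1)‖ * ‖u j‖ :=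
        le_opNorm _ _
      rw [(hstep j).1, mul_one] at h3
      have h4 := hSj (j + 1)
      have h5 : 4 * d (j + 1) = (d j) ^ 2 := by rw [hdsucc]; ring
      rw [← Real.norm_eq_abs]
      have h6 : ‖yl‖ * ‖(S - chain T d (j + 1)) (u j)‖ ≤ 1 * (2 * d (j + 1)) := by
        apply mul_le_mul hyl1 (by linarith) (norm_nonneg _) zero_le_one
      nlinarith [hdpos (j + 1)]
    have q3 : |yl (chain T d (j + 1) (u j))| =
        (‖chain T d j (u j)‖ + d j * tt j) * |yl (wv j)| := by
      rw [htt3 j, map_smul, smul_eq_mul, abs_mul, abs_of_nonneg (hcu_nonneg j)]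
    have q4 := hc_lb j
    have q5 := hcu_ub j
    have q6 := hwcl j
    have q7 := hSa j
    have q8 := ha_ub j
    have q9 := hdle1 j
    have q10 := hdpos j
    have q11 : |yl (S (u j))| ≥ |yl (chain T d (j + 1) (u j))| - (d j) ^ 2 := by
      have := abs_sub_abs_le_abs_sub (yl (chain T d (j + 1) (u j))) (yl (S (u j)))
      rw [abs_sub_comm] at this
      linarith
    have q12 : (‖chain T d j (u j)‖ + d j * tt j) * |yl (wv j)| ≥
        (‖chain T d j (u j)‖ + d j * tt j) * (1 - (2 + 2 / ‖T‖) * d j) := by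
      apply mul_le_mul_of_nonneg_left q6 (hcu_nonneg j)
    have q13 : (0:ℝ) ≤ (2 + 2 / ‖T‖) * d j := by positivity
    nlinarith [hcu_nonneg j, mul_le_mul_of_nonneg_right q5 q13]
  have hSle : ‖S‖ ≤ ‖yl.comp S‖ := by
    have h1 : Filter.Tendsto (fun j => ‖yl.comp S‖ +
        (2 + (1 + 2 / ‖T‖) + (2 + 2 / ‖T‖) * (2 * ‖T‖ + 1)) * d j) atTop
        (nhds (‖yl.comp S‖)) := by
      have h2 := hdtend.const_mul (2 + (1 + 2 / ‖T‖) + (2 + 2 / ‖T‖) * (2 * ‖T‖ + 1))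
      have h3 := (tendsto_const_nhds (x := ‖yl.comp S‖) (f := atTop (α := ℕ))).add h2
      simpa using h3
    exact ge_of_tendsto h1 (Filter.Eventually.of_forall hfinal)
  have hgeq : ‖yl.comp S‖ = ‖S‖ := by
    apply le_antisymm _ hSle
    calc ‖yl.comp S‖ ≤ ‖yl‖ * ‖S‖ := opNorm_comp_le _ _
      _ ≤ 1 * ‖S‖ := mul_le_mul_of_nonneg_right hyl1 (norm_nonneg _)
      _ = ‖S‖ := one_mul _
  -- apply the norm-attainment hypothesis
  obtain ⟨x, hx1, hx2⟩ := hNA (yl.comp S)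
    (fun z hz => by rw [comp_apply, hkerS z hz, map_zero])
  have hxS : ‖S x‖ = ‖S‖ := by
    have h1 : ‖S x‖ ≤ ‖S‖ := by
      have := S.le_opNorm x
      rw [hx1, mul_one] at this
      exact this
    have h2 : |yl (S x)| ≤ ‖S x‖ := by
      have h3 : ‖yl (S x)‖ ≤ ‖yl‖ * ‖S x‖ := le_opNorm _ _
      have h4 : ‖yl‖ * ‖S x‖ ≤ 1 * ‖S x‖ := mul_le_mul_of_nonneg_right hyl1 (norm_nonneg _)
      rw [← Real.norm_eq_abs]
      linarith
    have h3 : |yl (S x)| = ‖S‖ := by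
      have h4 : (yl.comp S) x = yl (S x) := rfl
      rw [← h4, hx2, hgeq]
    linarith
  exact ⟨S, ⟨x, hx1, hxS⟩, fun z hz => LinearMap.mem_ker.mpr (hkerS z hz), hTS⟩
end

section
/- Let X be a Banach space, z₀ ∈ X, and f, g ∈ X* linearly independent. Put M = ker f ∩ ker g. Then dist(z₀, M) = sup over (t,s) ∈ ℝ² \ {(0,0)} of |t f(z₀) + s g(z₀)| / ‖t f + s g‖. -/
open Metric

theorem statement_14
    {X : Type*} [NormedAddCommGroup X] [NormedSpace ℝ X] [CompleteSpace X]
    (z₀ : X) (f g : X →L[ℝ] ℝ) (hind : LinearIndependent ℝ ![f, g]) :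
    Metric.infDist z₀ ((LinearMap.ker (f : X →ₗ[ℝ] ℝ) ⊓ LinearMap.ker (g : X →ₗ[ℝ] ℝ) : Submodule ℝ X) : Set X)
      = ⨆ p : {p : ℝ × ℝ // p ≠ 0},
          |p.1.1 * f z₀ + p.1.2 * g z₀| / ‖p.1.1 • f + p.1.2 • g‖ := by
  classical
  set M : Submodule ℝ X := LinearMap.ker (f : X →ₗ[ℝ] ℝ) ⊓ LinearMap.ker (g : X →ₗ[ℝ] ℝ) with hM
  haveI : Nonempty {p : ℝ × ℝ // p ≠ 0} := ⟨⟨(1, 0), by simp [Prod.ext_iff]⟩⟩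
  have hMne : ((M : Set X)).Nonempty := ⟨0, M.zero_mem⟩
  have hmem : ∀ m ∈ M, f m = 0 ∧ g m = 0 := by
    intro m hm
    rw [hM, Submodule.mem_inf] at hm
    exact ⟨hm.1, hm.2⟩
  haveI hMc : IsClosed (M : Set X) := by
    have : (M : Set X) = (LinearMap.ker (f : X →ₗ[ℝ] ℝ) : Set X) ∩ (LinearMap.ker (g : X →ₗ[ℝ] ℝ) : Set X) := by
      simp [hM]
    rw [this]
    exact (ContinuousLinearMap.isClosed_ker f).inter (ContinuousLinearMap.isClosed_ker g)
  -- easy direction: each term ≤ infDist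
  have hub : ∀ p : {p : ℝ × ℝ // p ≠ 0},
      |p.1.1 * f z₀ + p.1.2 * g z₀| / ‖p.1.1 • f + p.1.2 • g‖ ≤ Metric.infDist z₀ M := by
    rintro ⟨⟨t, s⟩, -⟩
    set h : X →L[ℝ] ℝ := t • f + s • g with hh
    have happ : ∀ x, h x = t * f x + s * g x := by intro x; simp [hh]
    rcases eq_or_ne ‖h‖ 0 with h0 | h0
    · rw [← happ, h0, div_zero]; exact Metric.infDist_nonneg
    · rw [Metric.infDist_eq_iInf]
      refine le_ciInf ?_
      rintro ⟨m, hm⟩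
      rw [div_le_iff₀ (lt_of_le_of_ne (norm_nonneg _) (Ne.symm h0))]
      have hz : t * f z₀ + s * g z₀ = h (z₀ - m) := by
        rw [happ, map_sub f, map_sub g, (hmem m hm).1, (hmem m hm).2]; ring
      calc |t * f z₀ + s * g z₀| = |h (z₀ - m)| := by rw [hz]
        _ ≤ ‖h‖ * ‖z₀ - m‖ := h.le_opNorm _
        _ = dist z₀ m * ‖h‖ := by rw [dist_eq_norm]; ring
  have hbdd : BddAbove (Set.range fun p : {p : ℝ × ℝ // p ≠ 0} =>
      |p.1.1 * f z₀ + p.1.2 * g z₀| / ‖p.1.1 • f + p.1.2 • g‖) :=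
    ⟨Metric.infDist z₀ M, by rintro x ⟨p, rfl⟩; exact hub p⟩
  refine le_antisymm ?_ (ciSup_le hub)
  by_cases hz₀ : z₀ ∈ M
  · rw [Metric.infDist_zero_of_mem hz₀]
    exact le_trans (le_of_eq rfl)
      ((le_ciSup hbdd (⟨(1,0), by simp [Prod.ext_iff]⟩ : {p : ℝ × ℝ // p ≠ 0})).trans_eq' (by
        simp [(hmem z₀ hz₀).1]))
    |>.trans (le_refl _)
  · -- quotient + Hahn-Banach
    set Q := X ⧸ M
    have hq0 : (Submodule.Quotient.mk z₀ : Q) ≠ 0 := by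
      simpa [Submodule.Quotient.mk_eq_zero] using hz₀
    obtain ⟨φ, hφ1, hφz⟩ := exists_dual_vector ℝ (Submodule.Quotient.mk z₀ : Q) (norm_ne_zero_iff.2 hq0)
    -- the functional h = φ ∘ mk, as a linear map
    set K : X →ₗ[ℝ] ℝ := φ.toLinearMap.comp M.mkQ with hK
    have hKM : M ≤ LinearMap.ker K := by
      intro m hm
      simp [hK, (Submodule.Quotient.mk_eq_zero M).2 hm, LinearMap.mem_ker,
        Submodule.mkQ_apply]
    have hker : (⨅ i : Fin 2, LinearMap.ker ((![f.toLinearMap, g.toLinearMap]) i))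
        ≤ LinearMap.ker K := by
      refine le_trans ?_ hKM
      intro x hx
      simp only [Submodule.mem_iInf] at hx
      have h0 := hx 0
      have h1 := hx 1
      simp only [Matrix.cons_val_zero, Matrix.cons_val_one, Matrix.head_cons,
        LinearMap.mem_ker, ContinuousLinearMap.coe_coe] at h0 h1
      rw [hM, Submodule.mem_inf]
      exact ⟨h0, h1⟩
    obtain ⟨c, hc⟩ := (Submodule.mem_span_range_iff_exists_fun ℝ).1
      (mem_span_of_iInf_ker_le_ker hker)
    set t := c 0
    set s := c 1
    set h : X →L[ℝ] ℝ := t • f + s • g with hh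
    have happ : ∀ x, h x = φ (Submodule.Quotient.mk x) := by
      intro x
      have := congrArg (fun (L : X →ₗ[ℝ] ℝ) => L x) hc
      simp only [LinearMap.coe_sum, Finset.sum_apply, LinearMap.smul_apply] at this
      rw [Fin.sum_univ_two] at this
      simp only [Matrix.cons_val_zero, Matrix.cons_val_one, Matrix.head_cons,
        ContinuousLinearMap.coe_coe, smul_eq_mul] at this
      simpa [hh, hK] using this
    -- norm of mk z₀ equals infDist
    have hnorm_mk : ∀ x : X, ‖(Submodule.Quotient.mk x : Q)‖ = Metric.infDist x (M : Set X) :=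
      fun x => QuotientAddGroup.norm_mk (S := M.toAddSubgroup) x
    have hhz : h z₀ = Metric.infDist z₀ (M : Set X) := by
      rw [happ, hφz, hnorm_mk]
      simp
    have hd_pos : 0 < Metric.infDist z₀ (M : Set X) :=
      (hMc.notMem_iff_infDist_pos hMne).1 hz₀
    have hnh : ‖h‖ ≤ 1 := by
      refine ContinuousLinearMap.opNorm_le_bound h zero_le_one ?_
      intro x
      rw [happ]
      calc ‖φ (Submodule.Quotient.mk x)‖ ≤ ‖φ‖ * ‖(Submodule.Quotient.mk x : Q)‖ :=
            φ.le_opNorm _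
        _ = ‖(Submodule.Quotient.mk x : Q)‖ := by rw [hφ1, one_mul]
        _ ≤ ‖x‖ := Submodule.Quotient.norm_mk_le M x
        _ = 1 * ‖x‖ := (one_mul _).symm
    have hh_pos : 0 < ‖h‖ := by
      rcases eq_or_lt_of_le (norm_nonneg h) with h0 | h0
      · exfalso
        have : h = 0 := by rwa [eq_comm, norm_eq_zero] at h0
        rw [this] at hhz
        simp only [ContinuousLinearMap.zero_apply] at hhz
        exact hd_pos.ne hhz
      · exact h0
    have hts : ((t, s) : ℝ × ℝ) ≠ 0 := by
      intro h0
      have ht : t = 0 := congrArg Prod.fst h0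
      have hs : s = 0 := congrArg Prod.snd h0
      rw [ht, hs] at hh
      simp only [zero_smul, add_zero] at hh
      rw [hh] at hh_pos
      simp at hh_pos
    have key : Metric.infDist z₀ (M : Set X) ≤ |t * f z₀ + s * g z₀| / ‖t • f + s • g‖ := by
      have h1 : t * f z₀ + s * g z₀ = h z₀ := by simp [hh]
      rw [h1, ← hh, le_div_iff₀ hh_pos]
      calc Metric.infDist z₀ (M : Set X) * ‖h‖ ≤ Metric.infDist z₀ (M : Set X) * 1 :=
            mul_le_mul_of_nonneg_left hnh hd_pos.le
        _ = h z₀ := by rw [mul_one, hhz]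
        _ ≤ |h z₀| := le_abs_self _
    exact key.trans (le_ciSup hbdd (⟨(t, s), hts⟩ : {p : ℝ × ℝ // p ≠ 0}))
end

section
/- Let X be a Banach space, f ∈ X* with ‖f‖ = 1, h ∈ X* with ‖h‖ ≤ 1, h ≠ 0, and suppose there exist K, ε > 0 such that ‖f + t h‖ ≤ 1 + K t² for all t ∈ (−ε, ε). Then there exists 0 < s ≤ 1 such that ‖f + t s h‖ ≤ √(1 + t²) for all t ∈ ℝ. -/
lemma aux_quad_16 (a b : ℝ) (ha : 3/4 < a) (hb0 : 0 < b) (hb : b ≤ 1/3) :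
    (1 + a * b)^2 ≤ 1 + a^2 := by
  nlinarith [mul_nonneg (le_of_lt (lt_trans (by norm_num) ha)) hb0.le,
    mul_nonneg (by linarith : (0:ℝ) ≤ a - 3/4) (by linarith : (0:ℝ) ≤ 1/3 - b),
    sq_nonneg (a*b)]

theorem statement_16
    {X : Type*} [NormedAddCommGroup X] [NormedSpace ℝ X] [CompleteSpace X]
    (f h : X →L[ℝ] ℝ) (hf : ‖f‖ = 1) (hh : ‖h‖ ≤ 1) (hh0 : h ≠ 0)
    (K ε : ℝ) (hK : 0 < K) (hε : 0 < ε)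
    (hineq : ∀ t : ℝ, t ∈ Set.Ioo (-ε) ε → ‖f + t • h‖ ≤ 1 + K * t ^ 2) :
    ∃ s : ℝ, 0 < s ∧ s ≤ 1 ∧
      ∀ t : ℝ, ‖f + t • s • h‖ ≤ Real.sqrt (1 + t ^ 2) := by
  have hKs : (0:ℝ) < Real.sqrt K := Real.sqrt_pos.mpr hK
  set s := min (1/3 : ℝ) (min ε (1/(2*Real.sqrt K))) with hsdef
  have hspos : 0 < s := by
    apply lt_min (by norm_num)
    exact lt_min hε (by positivity)
  have hs13 : s ≤ 1/3 := min_le_left _ _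
  have hsε : s ≤ ε := le_trans (min_le_right _ _) (min_le_left _ _)
  have hsK : s ≤ 1/(2*Real.sqrt K) := le_trans (min_le_right _ _) (min_le_right _ _)
  have hsqK : (Real.sqrt K)^2 = K := Real.sq_sqrt hK.le
  have hKs2 : K * s^2 ≤ 1/4 := by
    have h1 : s * (2*Real.sqrt K) ≤ 1 := by
      rw [← le_div_iff₀ (by positivity)] ; exact hsK
    have h2 : Real.sqrt K * s ≤ 1/2 := by nlinarith
    have h3 : (Real.sqrt K * s)^2 ≤ (1/2)^2 :=
      pow_le_pow_left₀ (by positivity) h2 2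
    nlinarith [h3, hsqK]
  refine ⟨s, hspos, le_trans hs13 (by norm_num), ?_⟩
  intro t
  rw [smul_smul]
  by_cases hcase : |t| ≤ 3/4
  · obtain ⟨ht1, ht2⟩ := abs_le.mp hcase
    have hts : t * s ∈ Set.Ioo (-ε) ε := by
      constructor <;> nlinarith
    have hb := hineq (t*s) hts
    have hsq : 1 + t^2/4 ≤ Real.sqrt (1+t^2) := by
      rw [show (1 + t^2/4 : ℝ) = Real.sqrt ((1+t^2/4)^2) from
        (Real.sqrt_sq (by positivity)).symm]
      apply Real.sqrt_le_sqrt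
      have ht2sq : t^2 ≤ 9/16 := by nlinarith [sq_abs t]
      nlinarith [ht2sq, sq_nonneg t]
    have h2 : 1 + K*(t*s)^2 ≤ 1 + t^2/4 := by nlinarith [sq_nonneg t]
    linarith
  · push_neg at hcase
    have htri : ‖f + (t*s) • h‖ ≤ 1 + |t| * s := by
      calc ‖f + (t*s) • h‖ ≤ ‖f‖ + ‖(t*s) • h‖ := norm_add_le _ _
        _ = 1 + |t*s| * ‖h‖ := by rw [hf, norm_smul (t*s) h, Real.norm_eq_abs]
        _ ≤ 1 + |t| * s := by
            rw [abs_mul, abs_of_pos hspos]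
            nlinarith [mul_nonneg (abs_nonneg t) hspos.le, norm_nonneg h, hh]
    have h2 : 1 + |t| * s ≤ Real.sqrt (1+t^2) := by
      rw [show (1 + |t| * s : ℝ) = Real.sqrt ((1 + |t| * s)^2) from
        (Real.sqrt_sq (by positivity)).symm]
      apply Real.sqrt_le_sqrt
      have h4 := aux_quad_16 |t| s hcase hspos hs13
      rw [sq_abs t] at h4
      linarith
    linarith
end

section
/- Let X be a real Banach space and f ∈ X* with ‖f‖ = 1. There exists g ∈ X*, g ≠ 0, linearly independent from f, with the rank-two operator x ↦ (f(x), g(x)) from X to Euclidean ℝ² having operator norm at most 1, if and only if the operator x ↦ (f(x), 0) is not an extreme point of the closed unit ball of the space of bounded operators from X to Euclidean ℝ². -/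
/-- The operator `x ↦ (f x, g x)` from `X` into the Euclidean plane. -/
noncomputable def pairOperator {X : Type*} [NormedAddCommGroup X] [NormedSpace ℝ X]
    (f g : X →L[ℝ] ℝ) : X →L[ℝ] EuclideanSpace ℝ (Fin 2) :=
  (((EuclideanSpace.equiv (Fin 2) ℝ).symm :
      (Fin 2 → ℝ) ≃L[ℝ] EuclideanSpace ℝ (Fin 2)) :
      (Fin 2 → ℝ) →L[ℝ] EuclideanSpace ℝ (Fin 2)).comp
    (ContinuousLinearMap.pi ![f, g])

section Aux

variable {X : Type*} [NormedAddCommGroup X] [NormedSpace ℝ X] (f g : X →L[ℝ] ℝ)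

lemma euclid_norm (y : EuclideanSpace ℝ (Fin 2)) : ‖y‖ = Real.sqrt ((y 0)^2 + (y 1)^2) := by
  rw [EuclideanSpace.norm_eq, Fin.sum_univ_two]
  simp [Real.norm_eq_abs, sq_abs]

lemma coord0_le (y : EuclideanSpace ℝ (Fin 2)) : |y 0| ≤ ‖y‖ := by
  rw [euclid_norm, ← Real.sqrt_sq_eq_abs]
  exact Real.sqrt_le_sqrt (by nlinarith [sq_nonneg (y 1)])

lemma pair_apply0 (x : X) : pairOperator f g x 0 = f x := by simp [pairOperator]
lemma pair_apply1 (x : X) : pairOperator f g x 1 = g x := by simp [pairOperator]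

lemma pair_norm_apply (x : X) :
    ‖pairOperator f g x‖ = Real.sqrt ((f x)^2 + (g x)^2) := by
  rw [euclid_norm, pair_apply0, pair_apply1]

lemma eq_pair (A : X →L[ℝ] EuclideanSpace ℝ (Fin 2))
    (h0 : ∀ x, A x 0 = f x) (h1 : ∀ x, A x 1 = g x) : A = pairOperator f g := by
  ext x i
  fin_cases i
  · simpa [pair_apply0] using h0 x
  · simpa [pair_apply1] using h1 x

lemma sq_add_sq_le (A : X →L[ℝ] EuclideanSpace ℝ (Fin 2)) (hA : ‖A‖ ≤ 1) (x : X) :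
    (A x 0)^2 + (A x 1)^2 ≤ ‖x‖^2 := by
  have h := A.le_opNorm x
  have h2 : ‖A x‖ ≤ ‖x‖ := h.trans (by nlinarith [norm_nonneg x])
  rw [euclid_norm] at h2
  nlinarith [Real.sq_sqrt (by positivity : (0:ℝ) ≤ (A x 0)^2 + (A x 1)^2),
    Real.sqrt_nonneg ((A x 0)^2 + (A x 1)^2), norm_nonneg x]

lemma norm_pair_zero : ‖pairOperator f (0 : X →L[ℝ] ℝ)‖ = ‖f‖ := by
  apply le_antisymm
  · apply ContinuousLinearMap.opNorm_le_bound _ (norm_nonneg f)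
    intro x
    rw [pair_norm_apply]
    simp only [ContinuousLinearMap.zero_apply]
    rw [zero_pow (by norm_num), add_zero, Real.sqrt_sq_eq_abs]
    exact f.le_opNorm x
  · apply ContinuousLinearMap.opNorm_le_bound _ (norm_nonneg _)
    intro x
    have : |f x| ≤ ‖pairOperator f 0 x‖ := by
      rw [pair_norm_apply]; simp only [ContinuousLinearMap.zero_apply]
      rw [zero_pow (by norm_num), add_zero, Real.sqrt_sq_eq_abs]
    exact this.trans ((pairOperator f 0).le_opNorm x)

lemma indep_of_le (hf : ‖f‖ = 1) (hg : g ≠ 0) (hle : ‖pairOperator f g‖ ≤ 1) :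
    LinearIndependent ℝ ![f, g] := by
  rw [linearIndependent_fin2]
  refine ⟨by simpa using hg, fun a ha => ?_⟩
  simp only [Matrix.cons_val_one, Matrix.head_cons, Matrix.cons_val_zero] at ha
  have ha0 : a ≠ 0 := by
    rintro rfl
    rw [zero_smul] at ha
    rw [← ha, norm_zero] at hf
    norm_num at hf
  have hsq : ∀ x, (f x)^2 + (g x)^2 ≤ ‖x‖^2 := by
    intro x
    have := sq_add_sq_le (pairOperator f g) hle x
    rwa [pair_apply0, pair_apply1] at this
  set c : ℝ := |a| / Real.sqrt (1 + a^2) with hc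
  have hsqrtpos : 0 < Real.sqrt (1 + a^2) := Real.sqrt_pos.mpr (by positivity)
  have hfc : ‖f‖ ≤ c := by
    apply ContinuousLinearMap.opNorm_le_bound _ (by positivity)
    intro x
    have hfx : f x = a * g x := by rw [← ha]; rfl
    have h1 : (g x)^2 * (1 + a^2) ≤ ‖x‖^2 := by
      have := hsq x; rw [hfx] at this; nlinarith
    have h2 : |g x| * Real.sqrt (1 + a^2) ≤ ‖x‖ := by
      nlinarith [abs_nonneg (g x), Real.sq_sqrt (by positivity : (0:ℝ) ≤ 1 + a^2),
        norm_nonneg x, sq_abs (g x)]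
    rw [Real.norm_eq_abs, hfx, abs_mul, hc, div_mul_eq_mul_div,
      le_div_iff₀ hsqrtpos]
    calc |a| * |g x| * Real.sqrt (1 + a^2) = |a| * (|g x| * Real.sqrt (1 + a^2)) := by ring
    _ ≤ |a| * ‖x‖ := mul_le_mul_of_nonneg_left h2 (abs_nonneg a)
  have hclt : c < 1 := by
    rw [hc, div_lt_one hsqrtpos, ← Real.sqrt_sq_eq_abs]
    exact Real.sqrt_lt_sqrt (by positivity) (by nlinarith)
  rw [hf] at hfc
  linarith

end Aux

set_option maxHeartbeats 1000000 in
theorem statement_19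
    {X : Type*} [NormedAddCommGroup X] [NormedSpace ℝ X] [CompleteSpace X]
    (f : X →L[ℝ] ℝ) (hf : ‖f‖ = 1) :
    (∃ g : X →L[ℝ] ℝ, g ≠ 0 ∧ LinearIndependent ℝ ![f, g] ∧
        ‖pairOperator f g‖ ≤ 1) ↔
      pairOperator f 0 ∉ Set.extremePoints ℝ
        (Metric.closedBall (0 : X →L[ℝ] EuclideanSpace ℝ (Fin 2)) 1) := by
  constructor
  · rintro ⟨g, hg0, -, hgle⟩ hext
    rw [mem_extremePoints] at hext
    obtain ⟨-, hkey⟩ := hext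
    have hPg : pairOperator f g ∈ Metric.closedBall (0 : X →L[ℝ] EuclideanSpace ℝ (Fin 2)) 1 := by
      rwa [Metric.mem_closedBall, dist_zero_right]
    have hPg' : pairOperator f (-g) ∈
        Metric.closedBall (0 : X →L[ℝ] EuclideanSpace ℝ (Fin 2)) 1 := by
      rw [Metric.mem_closedBall, dist_zero_right]
      apply ContinuousLinearMap.opNorm_le_bound _ zero_le_one
      intro x
      rw [pair_norm_apply]
      simp only [ContinuousLinearMap.neg_apply, neg_sq]
      rw [← pair_norm_apply, one_mul]
      exact ((pairOperator f g).le_opNorm x).trans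
        (by nlinarith [norm_nonneg x])
    have hseg : pairOperator f 0 ∈
        openSegment ℝ (pairOperator f g) (pairOperator f (-g)) := by
      refine ⟨1/2, 1/2, by norm_num, by norm_num, by norm_num, ?_⟩
      apply eq_pair
      · intro x
        simp [pair_apply0]
        ring
      · intro x
        simp [pair_apply1]
    obtain ⟨h1, -⟩ := hkey _ hPg _ hPg' hseg
    apply hg0
    ext x
    have := congrArg (fun T : X →L[ℝ] EuclideanSpace ℝ (Fin 2) => T x 1) h1
    simpa [pair_apply1] using this
  · intro hext
    have hmem : pairOperator f 0 ∈
        Metric.closedBall (0 : X →L[ℝ] EuclideanSpace ℝ (Fin 2)) 1 := by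
      rw [Metric.mem_closedBall, dist_zero_right, norm_pair_zero, hf]
    rw [mem_extremePoints] at hext
    push_neg at hext
    obtain ⟨A, hA, B, hB, hseg, hne⟩ := hext hmem
    rw [Metric.mem_closedBall, dist_zero_right] at hA hB
    obtain ⟨t, u, ht, hu, htu, hcomb⟩ := hseg
    have hc0 : ∀ x, t * A x 0 + u * B x 0 = f x := by
      intro x
      have := congrArg (fun T : X →L[ℝ] EuclideanSpace ℝ (Fin 2) => T x 0) hcomb
      simpa [pair_apply0] using this
    have hc1 : ∀ x, t * A x 1 + u * B x 1 = 0 := by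
      intro x
      have := congrArg (fun T : X →L[ℝ] EuclideanSpace ℝ (Fin 2) => T x 1) hcomb
      simpa [pair_apply1] using this
    set a1 : X →L[ℝ] ℝ := (EuclideanSpace.proj (0 : Fin 2)).comp A with ha1
    set a2 : X →L[ℝ] ℝ := (EuclideanSpace.proj (1 : Fin 2)).comp A with ha2
    set b1 : X →L[ℝ] ℝ := (EuclideanSpace.proj (0 : Fin 2)).comp B with hb1
    have ha1x : ∀ x, a1 x = A x 0 := fun x => rfl
    have ha2x : ∀ x, a2 x = A x 1 := fun x => rfl
    have hb1x : ∀ x, b1 x = B x 0 := fun x => rfl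
    by_cases ha20 : a2 = 0
    · -- second coordinates vanish; use the first coordinates
      have hA1 : ∀ x, A x 1 = 0 := by
        intro x; rw [← ha2x, ha20]; rfl
      have hB1 : ∀ x, B x 1 = 0 := by
        intro x
        have h := hc1 x
        rw [hA1 x, mul_zero, zero_add] at h
        exact (mul_eq_zero.mp h).resolve_left hu.ne'
      have hAB : a1 ≠ b1 := by
        intro hab
        have hAe : A = pairOperator f 0 := by
          apply eq_pair
          · intro x
            have h0 := hc0 x
            have hba : B x 0 = A x 0 := by
              have h' : a1 x = b1 x := by rw [hab]
              rw [ha1x, hb1x] at h'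
              exact h'.symm
            linear_combination h0 - u * hba - A x 0 * htu
          · intro x; simpa using hA1 x
        have hBe : B = pairOperator f 0 := by
          apply eq_pair
          · intro x
            have h0 := hc0 x
            have hba : B x 0 = A x 0 := by
              have h' : a1 x = b1 x := by rw [hab]
              rw [ha1x, hb1x] at h'
              exact h'.symm
            linear_combination h0 + t * hba - B x 0 * htu
          · intro x; simpa using hB1 x
        exact hne hAe hBe
      set g : X →L[ℝ] ℝ := Real.sqrt (t * u) • (a1 - b1) with hgdef
      have hstu : (0:ℝ) < t * u := mul_pos ht hu
      have hg0 : g ≠ 0 := by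
        intro h
        apply hAB
        ext x
        have hx : g x = 0 := by rw [h]; rfl
        rw [hgdef] at hx
        simp only [ContinuousLinearMap.smul_apply, ContinuousLinearMap.sub_apply,
          smul_eq_mul] at hx
        rcases mul_eq_zero.mp hx with h' | h'
        · exact absurd h' (Real.sqrt_pos.mpr hstu).ne'
        · exact sub_eq_zero.mp h'
      have hle : ‖pairOperator f g‖ ≤ 1 := by
        apply ContinuousLinearMap.opNorm_le_bound _ zero_le_one
        intro x
        rw [pair_norm_apply, one_mul]
        have hgx : g x = Real.sqrt (t * u) * (A x 0 - B x 0) := by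
          rw [hgdef]
          simp only [ContinuousLinearMap.smul_apply, ContinuousLinearMap.sub_apply,
            smul_eq_mul, ha1x, hb1x]
        rw [hgx, ← hc0 x]
        have hu1 : (A x 0)^2 + (A x 1)^2 ≤ ‖x‖^2 := sq_add_sq_le A hA x
        have hu2 : (B x 0)^2 + (B x 1)^2 ≤ ‖x‖^2 := sq_add_sq_le B hB x
        rw [hA1 x] at hu1
        rw [hB1 x] at hu2
        have hsq : (t * A x 0 + u * B x 0)^2 +
            (Real.sqrt (t * u) * (A x 0 - B x 0))^2 ≤ ‖x‖^2 := by
          have hs : Real.sqrt (t*u) ^ 2 = t * u := Real.sq_sqrt hstu.le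
          have hu' : u = 1 - t := by linarith
          rw [mul_pow, hs, hu']
          nlinarith [sq_nonneg (A x 0), sq_nonneg (B x 0)]
        calc Real.sqrt ((t * A x 0 + u * B x 0)^2 +
            (Real.sqrt (t * u) * (A x 0 - B x 0))^2)
            ≤ Real.sqrt (‖x‖^2) := Real.sqrt_le_sqrt hsq
          _ = ‖x‖ := Real.sqrt_sq (norm_nonneg x)
      exact ⟨g, hg0, indep_of_le f g hf hg0 hle, hle⟩
    · -- a2 ≠ 0 : use g = t • a2
      set g : X →L[ℝ] ℝ := t • a2 with hgdef
      have hg0 : g ≠ 0 := by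
        intro h
        apply ha20
        ext x
        have hx : g x = 0 := by rw [h]; rfl
        rw [hgdef] at hx
        simp only [ContinuousLinearMap.smul_apply, smul_eq_mul] at hx
        simpa using (mul_eq_zero.mp hx).resolve_left ht.ne'
      have hb1n : ‖b1‖ ≤ 1 := by
        apply ContinuousLinearMap.opNorm_le_bound _ zero_le_one
        intro x
        rw [one_mul, Real.norm_eq_abs, hb1x]
        exact (coord0_le (B x)).trans ((B.le_opNorm x).trans (by nlinarith [norm_nonneg x]))
      have hdecomp : pairOperator f g = t • A + u • pairOperator b1 0 := by
        symm
        apply eq_pair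
        · intro x
          simp only [ContinuousLinearMap.add_apply, ContinuousLinearMap.smul_apply,
            PiLp.add_apply, PiLp.smul_apply, smul_eq_mul, pair_apply0, hb1x]
          linarith [hc0 x]
        · intro x
          simp only [ContinuousLinearMap.add_apply, ContinuousLinearMap.smul_apply,
            PiLp.add_apply, PiLp.smul_apply, smul_eq_mul, pair_apply1, hgdef, ha2x]
          simp [ha2x]
      have hle : ‖pairOperator f g‖ ≤ 1 := by
        rw [hdecomp]
        calc ‖t • A + u • pairOperator b1 0‖
            ≤ ‖t • A‖ + ‖u • pairOperator b1 0‖ := norm_add_le _ _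
          _ = t * ‖A‖ + u * ‖pairOperator b1 0‖ := by
              rw [norm_smul t A, norm_smul u (pairOperator b1 0), Real.norm_eq_abs,
                Real.norm_eq_abs, abs_of_pos ht, abs_of_pos hu]
          _ ≤ t * 1 + u * 1 := by
              have := norm_pair_zero b1
              gcongr
              · rw [norm_pair_zero]; exact hb1n
          _ = 1 := by linarith
      exact ⟨g, hg0, indep_of_le f g hf hg0 hle, hle⟩
end
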